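/- arXiv:1508.05963 — 5 statements merged into one kernel-verified Lean document; each statement's English description precedes it below -/
import Mathlib

section
/- Every interval [σ,τ] in the consecutive pattern poset is rank-unimodal: letting N = |τ|−|σ| and a_r = #{π : σ ≤ π ≤ τ, |π| = |σ|+r} for 0 ≤ r ≤ N, there exists k with 0 ≤ k ≤ N such that a_0 ≤ a_1 ≤ ⋯ ≤ a_k ≥ a_{k+1} ≥ ⋯ ≥ a_N. -/
open scoped Classical

noncomputable section

/-- A permutation of length `n`, written in one-line notation as `τ 0, τ 1, …, τ (n-1)`. -/
abbrev Perm' (n : ℕ) := Equiv.Perm (Fin n)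

/-- `σ` occurs in `τ` as a consecutive pattern at (0-indexed) starting position `i`:
the window `τ i, …, τ (i+m-1)` of adjacent entries is in the same relative order as `σ`. -/
def OccursAt {m n : ℕ} (σ : Perm' m) (τ : Perm' n) (i : ℕ) : Prop :=
  ∃ h : i + m ≤ n, ∀ a b : Fin m,
    σ a < σ b ↔
      τ ⟨i + a, by have := a.isLt; omega⟩ < τ ⟨i + b, by have := b.isLt; omega⟩

/-- Consecutive pattern containment `σ ≤ τ`. -/
def PattLE {m n : ℕ} (σ : Perm' m) (τ : Perm' n) : Prop :=
  ∃ i, OccursAt σ τ i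

/-- Permutations of arbitrary length: the carrier of the consecutive pattern poset. -/
abbrev PermS : Type := Σ n : ℕ, Perm' n

/-- The order of the consecutive pattern poset. -/
def pLE (p q : PermS) : Prop := PattLE p.2 q.2

/-- The strict order of the consecutive pattern poset. -/
def pLT (p q : PermS) : Prop := pLE p q ∧ p ≠ q

/-- The covering relation of the consecutive pattern poset. -/
def pCovBy (p q : PermS) : Prop :=
  pLT p q ∧ ∀ r : PermS, pLT p r → pLT r q → False

/-- The open interval `(p,q)` in the consecutive pattern poset. -/
def openInterval (p q : PermS) : Set PermS := {r | pLT p r ∧ pLT r q}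

/-- The Hasse diagram of the open interval `(p,q)`: vertices are the permutations strictly
between `p` and `q`, edges are the covering relations of the consecutive pattern poset. -/
def hasse (p q : PermS) : SimpleGraph (openInterval p q) :=
  SimpleGraph.fromRel fun a b => pCovBy a.1 b.1

/-- The interval `[p,q]` is disconnected if the Hasse diagram of `(p,q)` is not connected. -/
def IntervalDisconnected (p q : PermS) : Prop := ¬ (hasse p q).Connected

/-- `window τ i m` is the reduction of the window of `τ` of length `m` starting at
(0-indexed) position `i`, i.e. the pattern `τ[i+1, i+m]` in 1-indexed notation. -/
def window {n : ℕ} (τ : Perm' n) (i m : ℕ) : Perm' m :=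
  if h : i + m ≤ n then
    (Tuple.sort fun a : Fin m => τ ⟨i + a, by have := a.isLt; omega⟩)⁻¹
  else 1

/-- `τ` is monotone, i.e. equal to `12…n` or `n…21`. -/
def IsMonotone {n : ℕ} (τ : Perm' n) : Prop :=
  (∀ a b : Fin n, a ≤ b → τ a ≤ τ b) ∨ (∀ a b : Fin n, a ≤ b → τ b ≤ τ a)

/-- `τ` has a bifix (a common proper prefix and proper suffix) of length `k`. -/
def HasBifixLen {n : ℕ} (τ : Perm' n) (k : ℕ) : Prop :=
  0 < k ∧ k < n ∧ window τ 0 k = window τ (n - k) k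

/-- The length `|x(τ)|` of the exterior of `τ`, the longest bifix of `τ`. -/
def extLen {n : ℕ} (τ : Perm' n) : ℕ := Nat.findGreatest (HasBifixLen τ) n

/-- The exterior `x(τ)` of `τ`: its longest bifix. -/
def extPerm {n : ℕ} (τ : Perm' n) : Perm' (extLen τ) := window τ 0 (extLen τ)

/-- The interior `i(τ) = τ[2,n-1]` of `τ`. -/
def intPerm {n : ℕ} (τ : Perm' n) : Perm' (n - 2) := window τ 1 (n - 2)

/-- `p` straddles `q`: `p < q`, `p` is both a prefix and a suffix of `q`,
and `p` has no other occurrence in `q`. -/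
def Straddles (p q : PermS) : Prop :=
  pLT p q ∧ OccursAt p.2 q.2 0 ∧ OccursAt p.2 q.2 (q.1 - p.1) ∧
    ∀ i, OccursAt p.2 q.2 i → i = 0 ∨ i = q.1 - p.1

/-- The interval `[p,q]` contains a non-trivial disconnected subinterval, i.e. a
subinterval `[a,b]` of rank at least 3 which is disconnected. -/
def HasNontrivDisconSub (p q : PermS) : Prop :=
  ∃ a b : PermS, pLE p a ∧ pLE a b ∧ pLE b q ∧ a.1 + 3 ≤ b.1 ∧ IntervalDisconnected a b

/-- The finite set of all permutations of length at most `N`. -/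
def permsUpTo (N : ℕ) : Finset PermS :=
  (Finset.range (N + 1)).sigma fun n => (Finset.univ : Finset (Perm' n))

/-- The closed interval `[p,q]` of the consecutive pattern poset, as a finite set. -/
def intervalF (p q : PermS) : Finset PermS :=
  (permsUpTo q.1).filter fun r => pLE p r ∧ pLE r q

/-- The number of elements of the interval `[σ,τ]` of rank `r`, i.e. of length `|σ| + r`. -/
def rankCard {m n : ℕ} (σ : Perm' m) (τ : Perm' n) (r : ℕ) : ℕ :=
  ((permsUpTo n).filter fun p => pLE ⟨m, σ⟩ p ∧ pLE p ⟨n, τ⟩ ∧ p.1 = m + r).card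

/-- The direct sum `σ ⊕ π` of two permutations. -/
def dsum {m k : ℕ} (σ : Perm' m) (π : Perm' k) : Perm' (m + k) :=
  finSumFinEquiv.permCongr (σ.sumCongr π)



-- ===== auxiliary lemmas for stmt9 =====

-- W1
theorem window_occursAt {n ℓ i : ℕ} (τ : Perm' n) (h : i + ℓ ≤ n) :
    OccursAt (window τ i ℓ) τ i := by
  refine ⟨h, ?_⟩
  set f : Fin ℓ → Fin n := fun a => τ ⟨i + a, by have := a.isLt; omega⟩ with hf
  have hinj : Function.Injective f := by
    intro a b hab
    have := τ.injective hab
    have := Fin.mk.injEq .. ▸ this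
    exact Fin.ext (by omega)
  have hsm : StrictMono (f ∘ Tuple.sort f) :=
    (Tuple.monotone_sort f).strictMono_of_injective
      (hinj.comp (Tuple.sort f).injective)
  intro a b
  have hw : window τ i ℓ = (Tuple.sort f)⁻¹ := by
    rw [window, dif_pos h]
  rw [hw]
  constructor
  · intro hab
    have := hsm hab
    simpa [Function.comp, Equiv.apply_symm_apply] using this
  · intro hab
    have : f ((Tuple.sort f) ((Tuple.sort f)⁻¹ a)) < f ((Tuple.sort f) ((Tuple.sort f)⁻¹ b)) := by
      simpa [Equiv.apply_symm_apply] using hab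
    exact hsm.lt_iff_lt.mp this

-- uniqueness of pattern
theorem perm_eq_of_rel {ℓ : ℕ} {ρ ρ' : Perm' ℓ}
    (h : ∀ a b, ρ a < ρ b ↔ ρ' a < ρ' b) : ρ = ρ' := by
  have hsm : StrictMono (fun x => ρ' (ρ.symm x)) := by
    intro x y hxy
    have : ρ (ρ.symm x) < ρ (ρ.symm y) := by
      simpa [Equiv.apply_symm_apply] using hxy
    exact (h _ _).mp this
  have hid : (fun x => ρ' (ρ.symm x)) = id := by
    apply (hsm.range_inj strictMono_id).mp
    rw [Set.range_id]
    exact Set.range_eq_univ.mpr (ρ'.surjective.comp ρ.symm.surjective)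
  have : ∀ a, ρ' a = ρ a := by
    intro a
    have := congrFun hid (ρ a)
    simpa [Equiv.symm_apply_apply] using this
  exact Equiv.ext fun a => (this a).symm

-- W2
theorem eq_window_of_occursAt {n ℓ i : ℕ} {τ : Perm' n} {ρ : Perm' ℓ}
    (h : OccursAt ρ τ i) : ρ = window τ i ℓ := by
  obtain ⟨hle, hrel⟩ := h
  obtain ⟨_, hrel'⟩ := window_occursAt τ hle
  exact perm_eq_of_rel fun a b => (hrel a b).trans (hrel' a b).symm

-- composition of occurrences
theorem occursAt_trans {k l n : ℕ} {a : Perm' k} {b : Perm' l} {c : Perm' n}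
    {j i : ℕ} (hab : OccursAt a b j) (hbc : OccursAt b c i) :
    OccursAt a c (i + j) := by
  obtain ⟨h1, r1⟩ := hab
  obtain ⟨h2, r2⟩ := hbc
  refine ⟨by omega, ?_⟩
  intro p q
  have := (r1 p q).trans (r2 ⟨j + p, by have := p.isLt; omega⟩ ⟨j + q, by have := q.isLt; omega⟩)
  convert this using 2 <;> · apply congrArg; exact Fin.ext (by simp; omega)

theorem pattLE_trans {k l n : ℕ} {a : Perm' k} {b : Perm' l} {c : Perm' n}
    (hab : PattLE a b) (hbc : PattLE b c) : PattLE a c := by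
  obtain ⟨j, hj⟩ := hab; obtain ⟨i, hi⟩ := hbc
  exact ⟨i + j, occursAt_trans hj hi⟩

-- occurrence in window ↔ occurrence in τ
theorem occursAt_window_iff {m n ℓ i c : ℕ} {σ : Perm' m} (τ : Perm' n)
    (hin : i + ℓ ≤ n) (hc : c + m ≤ ℓ) :
    OccursAt σ (window τ i ℓ) c ↔ OccursAt σ τ (i + c) := by
  obtain ⟨_, hw⟩ := window_occursAt τ hin
  constructor
  · rintro ⟨h, hr⟩
    refine ⟨by omega, ?_⟩
    intro p q
    have := (hr p q).trans (hw ⟨c + p, by have := p.isLt; omega⟩ ⟨c + q, by have := q.isLt; omega⟩)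
    convert this using 2 <;> · apply congrArg; exact Fin.ext (by simp; omega)
  · rintro ⟨h, hr⟩
    refine ⟨hc, ?_⟩
    intro p q
    have h2 := hw ⟨c + p, by have := p.isLt; omega⟩ ⟨c + q, by have := q.isLt; omega⟩
    refine (hr p q).trans ?_
    refine Iff.trans ?_ h2.symm
    constructor <;> intro hh <;>
      · convert hh using 2 <;>
          first
            | (apply congrArg; exact Fin.ext (by simp; omega))
            | exact Fin.ext (by simp; omega)

theorem window_pattLE {n ℓ i c k : ℕ} (τ : Perm' n) (hin : i + ℓ ≤ n) (hc : c + k ≤ ℓ) :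
    PattLE (window τ (i + c) k) (window τ i ℓ) :=
  ⟨c, (occursAt_window_iff τ hin hc).mpr (window_occursAt τ (by omega))⟩

-- F1 : equal long windows give equal sub windows
theorem window_sub_eq {n ℓ i j c k : ℕ} (τ : Perm' n) (hi : i + ℓ ≤ n) (hj : j + ℓ ≤ n)
    (hc : c + k ≤ ℓ) (heq : window τ i ℓ = window τ j ℓ) :
    window τ (i + c) k = window τ (j + c) k := by
  have h1 : OccursAt (window τ (i+c) k) (window τ i ℓ) c :=
    (occursAt_window_iff τ hi hc).mpr (window_occursAt τ (by omega))
  rw [heq] at h1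
  have h2 := (occursAt_window_iff τ hj hc).mp h1
  exact eq_window_of_occursAt h2

-- F3 : validity decomposition
theorem valid_decomp {m n ℓ i : ℕ} {σ : Perm' m} (τ : Perm' n) (hm : m ≤ ℓ)
    (hin : i + (ℓ+1) ≤ n) (h : PattLE σ (window τ i (ℓ+1))) :
    PattLE σ (window τ i ℓ) ∨ PattLE σ (window τ (i+1) ℓ) := by
  obtain ⟨c, hc⟩ := h
  have hcm : c + m ≤ ℓ + 1 := hc.1
  have hocc : OccursAt σ τ (i + c) := (occursAt_window_iff τ hin hcm).mp hc
  by_cases hcl : c + m ≤ ℓ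
  · exact Or.inl ⟨c, (occursAt_window_iff τ (by omega) hcl).mpr hocc⟩
  · right
    have hc1 : 1 ≤ c := by omega
    refine ⟨c - 1, (occursAt_window_iff τ (by omega) (by omega)).mpr ?_⟩
    have : (i + 1) + (c - 1) = i + c := by omega
    rw [this]; exact hocc

variable {m n : ℕ} (σ : Perm' m) (τ : Perm' n)

/-- The set of distinct σ-containing windows of τ of length ℓ. -/
def Wset (ℓ : ℕ) : Finset (Perm' ℓ) :=
  ((Finset.range (n - ℓ + 1)).filter fun i => PattLE σ (window τ i ℓ)).image
    fun i => window τ i ℓ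

theorem mem_Wset {ℓ : ℕ} (hℓ : ℓ ≤ n) {q : Perm' ℓ} :
    q ∈ Wset σ τ ℓ ↔ ∃ i, i + ℓ ≤ n ∧ PattLE σ (window τ i ℓ) ∧ window τ i ℓ = q := by
  simp only [Wset, Finset.mem_image, Finset.mem_filter, Finset.mem_range]
  constructor
  · rintro ⟨i, ⟨hi, hv⟩, hq⟩; exact ⟨i, by omega, hv, hq⟩
  · rintro ⟨i, hi, hv, hq⟩; exact ⟨i, ⟨by omega, hv⟩, hq⟩

theorem Wset_card_le (ℓ : ℕ) : (Wset σ τ ℓ).card ≤ n - ℓ + 1 := by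
  refine le_trans (Finset.card_image_le) (le_trans (Finset.card_filter_le _ _) ?_)
  simp

/-- Key step: rank sizes satisfy `min (D ℓ) (n - ℓ) ≤ D (ℓ+1)`. -/
theorem main_step (hmℓ : m ≤ ℓ) (hℓ : ℓ + 1 ≤ n) :
    min (Wset σ τ ℓ).card (n - ℓ) ≤ (Wset σ τ (ℓ+1)).card := by
  by_cases hFull : (∀ i, i + (ℓ+1) ≤ n → PattLE σ (window τ i (ℓ+1))) ∧
      (∀ i j, i + (ℓ+1) ≤ n → j + (ℓ+1) ≤ n →
        window τ i (ℓ+1) = window τ j (ℓ+1) → i = j)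
  · -- all positions valid & injective : card = n - ℓ
    refine le_trans (min_le_right _ _) ?_
    have hV : ((Finset.range (n - (ℓ+1) + 1)).filter
        fun i => PattLE σ (window τ i (ℓ+1))) = Finset.range (n - ℓ) := by
      rw [Finset.filter_true_of_mem, show n - (ℓ+1) + 1 = n - ℓ by omega]
      intro i hi
      exact hFull.1 i (by simp at hi; omega)
    have hinj : Set.InjOn (fun i => window τ i (ℓ+1)) (Finset.range (n - ℓ)) := by
      intro i hi j hj hij
      simp only [Finset.coe_range, Set.mem_Iio] at hi hj
      exact hFull.2 i j (by omega) (by omega) hij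
    rw [Wset, hV, Finset.card_image_of_injOn hinj, Finset.card_range]
  · -- otherwise : D ℓ ≤ D (ℓ+1)
    refine le_trans (min_le_left _ _) ?_
    -- the extension map
    set f : Perm' ℓ → Perm' (ℓ+1) := fun v =>
      if h : ∃ i, i + (ℓ+1) ≤ n ∧ window τ i ℓ = v then
        window τ (Nat.find h) (ℓ+1) else 1 with hf
    have hf_spec : ∀ (v : Perm' ℓ) (h : ∃ i, i + (ℓ+1) ≤ n ∧ window τ i ℓ = v),
        f v = window τ (Nat.find h) (ℓ+1) ∧ (Nat.find h) + (ℓ+1) ≤ n ∧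
          window τ (Nat.find h) ℓ = v := by
      intro v h
      refine ⟨by rw [hf]; exact dif_pos h, (Nat.find_spec h).1, (Nat.find_spec h).2⟩
    -- prefix recovery : f v determines v
    have hprefix : ∀ i, i + (ℓ+1) ≤ n → window τ (i + 0) ℓ = window τ i ℓ := by
      intro i _; norm_num
    have hpre : ∀ {i j}, i + (ℓ+1) ≤ n → j + (ℓ+1) ≤ n →
        window τ i (ℓ+1) = window τ j (ℓ+1) → window τ i ℓ = window τ j ℓ := by
      intro i j hi hj hij
      have := window_sub_eq (c := 0) (k := ℓ) τ hi hj (by omega) hij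
      simpa using this
    have hsuf : ∀ {i j}, i + (ℓ+1) ≤ n → j + (ℓ+1) ≤ n →
        window τ i (ℓ+1) = window τ j (ℓ+1) → window τ (i+1) ℓ = window τ (j+1) ℓ := by
      intro i j hi hj hij
      exact window_sub_eq (c := 1) (k := ℓ) τ hi hj (by omega) hij
    have hWσ : ∀ v ∈ Wset σ τ ℓ, PattLE σ v := by
      intro v hv
      obtain ⟨i, hi, hvv, hq⟩ := (mem_Wset σ τ (by omega)).mp hv
      rwa [hq] at hvv
    have hWocc : ∀ v ∈ Wset σ τ ℓ, ∃ i, i + ℓ ≤ n ∧ window τ i ℓ = v := by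
      intro v hv
      obtain ⟨i, hi, hvv, hq⟩ := (mem_Wset σ τ (by omega)).mp hv
      exact ⟨i, hi, hq⟩
    have hprefLE : ∀ i, i + (ℓ+1) ≤ n → PattLE (window τ i ℓ) (window τ i (ℓ+1)) := by
      intro i hi
      have := window_pattLE (i := i) (c := 0) (k := ℓ) τ hi (by omega)
      simpa using this
    have hsufLE : ∀ i, i + (ℓ+1) ≤ n → PattLE (window τ (i+1) ℓ) (window τ i (ℓ+1)) := by
      intro i hi
      exact window_pattLE (i := i) (c := 1) (k := ℓ) τ hi (by omega)
    have hmaps : ∀ v ∈ Wset σ τ ℓ,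
        (∃ i, i + (ℓ+1) ≤ n ∧ window τ i ℓ = v) → f v ∈ Wset σ τ (ℓ+1) := by
      intro v hv h
      obtain ⟨hfv, hle, hw⟩ := hf_spec v h
      rw [hfv, mem_Wset σ τ (by omega)]
      refine ⟨Nat.find h, hle, ?_, rfl⟩
      have hp := hprefLE (Nat.find h) hle
      rw [hw] at hp
      exact pattLE_trans (hWσ v hv) hp
    by_cases hR : ∀ v ∈ Wset σ τ ℓ, ∃ i, i + (ℓ+1) ≤ n ∧ window τ i ℓ = v
    · refine Finset.card_le_card_of_injOn f (fun v hv => hmaps v hv (hR v hv)) ?_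
      intro v₁ hv₁ v₂ hv₂ h12
      simp only [Finset.mem_coe] at hv₁ hv₂
      obtain ⟨hfe₁, hle₁, hw₁⟩ := hf_spec v₁ (hR v₁ hv₁)
      obtain ⟨hfe₂, hle₂, hw₂⟩ := hf_spec v₂ (hR v₂ hv₂)
      rw [← hw₁, ← hw₂]
      exact hpre hle₁ hle₂ (by rw [← hfe₁, ← hfe₂, h12])
    · push_neg at hR
      obtain ⟨u', hu'mem, hu'uniq⟩ := hR
      have hu'w : window τ (n - ℓ) ℓ = u' := by
        obtain ⟨i, hi, hq⟩ := hWocc u' hu'mem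
        have : i = n - ℓ := by
          by_contra hne
          exact hu'uniq i (by omega) hq
        rwa [← this]
      set A' := (Wset σ τ ℓ).erase u' with hA'
      have hA'ex : ∀ v ∈ A', ∃ i, i + (ℓ+1) ≤ n ∧ window τ i ℓ = v := by
        intro v hv
        have hvne := Finset.ne_of_mem_erase hv
        have hvmem := Finset.mem_of_mem_erase hv
        obtain ⟨i, hi, hq⟩ := hWocc v hvmem
        refine ⟨i, ?_, hq⟩
        by_contra hc
        have : i = n - ℓ := by omega
        exact hvne (by rw [← hq, this, hu'w])
      have hinjA' : Set.InjOn f ↑A' := by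
        intro v₁ hv₁ v₂ hv₂ h12
        simp only [Finset.mem_coe] at hv₁ hv₂
        obtain ⟨hfe₁, hle₁, hw₁⟩ := hf_spec v₁ (hA'ex v₁ hv₁)
        obtain ⟨hfe₂, hle₂, hw₂⟩ := hf_spec v₂ (hA'ex v₂ hv₂)
        rw [← hw₁, ← hw₂]
        exact hpre hle₁ hle₂ (by rw [← hfe₁, ← hfe₂, h12])
      have himg : A'.image f ⊆ Wset σ τ (ℓ+1) := by
        intro q hq
        obtain ⟨v, hv, hfv⟩ := Finset.mem_image.mp hq
        rw [← hfv]
        exact hmaps v (Finset.mem_of_mem_erase hv) (hA'ex v hv)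
      have harith : (n - ℓ - 1) + (ℓ+1) = n := by omega
      have hq₀σ : PattLE σ (window τ (n - ℓ - 1) (ℓ+1)) := by
        refine pattLE_trans (hWσ u' hu'mem) ?_
        rw [← hu'w, show n - ℓ = (n - ℓ - 1) + 1 by omega]
        exact hsufLE _ (by omega)
      have hq₀mem : window τ (n - ℓ - 1) (ℓ+1) ∈ Wset σ τ (ℓ+1) :=
        (mem_Wset σ τ (by omega)).mpr ⟨n - ℓ - 1, by omega, hq₀σ, rfl⟩
      by_cases hBad : ∀ q ∈ Wset σ τ (ℓ+1), ∃ v ∈ A', f v = q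
      · exfalso
        apply hFull
        obtain ⟨v₀, hv₀A, hfv₀⟩ := hBad _ hq₀mem
        have hex₀ := hA'ex v₀ hv₀A
        obtain ⟨hfe₀, hle₀, hw₀⟩ := hf_spec v₀ hex₀
        have hq₀eq : window τ (Nat.find hex₀) (ℓ+1) = window τ (n - ℓ - 1) (ℓ+1) := by
          rw [← hfe₀, hfv₀]
        have hsuf₀ : window τ (Nat.find hex₀ + 1) ℓ = window τ (n - ℓ) ℓ := by
          have := hsuf hle₀ (by omega) hq₀eq
          rwa [show n - ℓ - 1 + 1 = n - ℓ by omega] at this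
        have hi₀ : Nat.find hex₀ = n - ℓ - 1 := by
          by_contra hne
          exact hu'uniq (Nat.find hex₀ + 1) (by omega) (by rw [hsuf₀, hu'w])
        have hu_uniq : ∀ i, i < n - ℓ - 1 → window τ i ℓ ≠ window τ (n - ℓ - 1) ℓ := by
          intro i hilt hcon
          refine Nat.find_min hex₀ (show i < Nat.find hex₀ by omega) ⟨by omega, ?_⟩
          rw [hcon, ← hi₀]
          exact hw₀
        -- validity of all positions at level ℓ+1
        have hval : ∀ i, i + (ℓ+1) ≤ n → PattLE σ (window τ i (ℓ+1)) := by
          by_contra hnv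
          push_neg at hnv
          obtain ⟨j₀, hj₀n, hj₀⟩ := hnv
          set P : ℕ → Prop := fun j => j + (ℓ+1) ≤ n ∧ ¬ PattLE σ (window τ j (ℓ+1)) with hP
          have hPj : P (Nat.findGreatest P n) :=
            Nat.findGreatest_spec (m := j₀) (by omega) ⟨hj₀n, hj₀⟩
          set j := Nat.findGreatest P n with hj
          have hjne : j ≠ n - ℓ - 1 := by
            intro he
            exact hPj.2 (he ▸ hq₀σ)
          have hjn : j + 1 + (ℓ+1) ≤ n := by
            have := hPj.1
            omega
          have hval1 : PattLE σ (window τ (j+1) (ℓ+1)) := by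
            by_contra hc
            exact Nat.findGreatest_is_greatest (show j < j+1 by omega)
              (show j+1 ≤ n by omega) ⟨hjn, hc⟩
          obtain ⟨v₁, hv₁A, hfv₁⟩ := hBad _
            ((mem_Wset σ τ (by omega)).mpr ⟨j+1, hjn, hval1, rfl⟩)
          have hex₁ := hA'ex v₁ hv₁A
          obtain ⟨hfe₁, hle₁, hw₁⟩ := hf_spec v₁ hex₁
          have h2 : window τ (j+1) ℓ = v₁ := by
            rw [← hw₁]
            exact hpre hjn hle₁ (by rw [← hfe₁, hfv₁])
          have hσj1 : PattLE σ (window τ (j+1) ℓ) := by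
            rw [h2]
            exact hWσ v₁ (Finset.mem_of_mem_erase hv₁A)
          exact hPj.2 (pattLE_trans hσj1 (hsufLE j hPj.1))
        -- injectivity at level ℓ
        have hinjℓ : ∀ p p', p + ℓ ≤ n → p' + ℓ ≤ n → window τ p ℓ = window τ p' ℓ → p = p' := by
          by_contra hni
          push_neg at hni
          obtain ⟨p₀, p₀', hp₀, hp₀', heq₀, hne₀⟩ := hni
          set P' : ℕ → Prop := fun q' => q' + ℓ ≤ n ∧ ∃ p < q', window τ p ℓ = window τ q' ℓ
            with hP'
          have hP'ex : ∃ x, P' x ∧ x ≤ n := by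
            rcases lt_or_gt_of_ne hne₀ with h | h
            · exact ⟨p₀', ⟨hp₀', p₀, h, heq₀⟩, by omega⟩
            · exact ⟨p₀, ⟨hp₀, p₀', h, heq₀.symm⟩, by omega⟩
          obtain ⟨x, hx, hxn⟩ := hP'ex
          have hPq' : P' (Nat.findGreatest P' n) := Nat.findGreatest_spec hxn hx
          set q' := Nat.findGreatest P' n with hq'def
          obtain ⟨hq'n, p, hpq', hpe⟩ := hPq'
          have hq'1 : q' ≠ n - ℓ := by
            intro he
            exact hu'uniq p (by omega) (by rw [hpe, he, hu'w])
          have hq'2 : q' ≠ n - ℓ - 1 := by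
            intro he
            exact hu_uniq p (by omega) (by rw [← he]; exact hpe)
          have hq'le : q' + 1 + (ℓ+1) ≤ n := by omega
          obtain ⟨v₂, hv₂A, hfv₂⟩ := hBad (window τ p (ℓ+1))
            ((mem_Wset σ τ (by omega)).mpr ⟨p, by omega, hval p (by omega), rfl⟩)
          obtain ⟨v₃, hv₃A, hfv₃⟩ := hBad (window τ q' (ℓ+1))
            ((mem_Wset σ τ (by omega)).mpr ⟨q', by omega, hval q' (by omega), rfl⟩)
          have hex₂ := hA'ex v₂ hv₂A
          obtain ⟨hfe₂, hle₂, hw₂⟩ := hf_spec v₂ hex₂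
          have hex₃ := hA'ex v₃ hv₃A
          obtain ⟨hfe₃, hle₃, hw₃⟩ := hf_spec v₃ hex₃
          have h2 : window τ p ℓ = v₂ := by
            rw [← hw₂]
            exact hpre (by omega) hle₂ (by rw [← hfe₂, hfv₂])
          have h3 : window τ q' ℓ = v₃ := by
            rw [← hw₃]
            exact hpre (by omega) hle₃ (by rw [← hfe₃, hfv₃])
          have hv23 : v₂ = v₃ := by rw [← h2, ← h3, hpe]
          have hqq : window τ p (ℓ+1) = window τ q' (ℓ+1) := by
            rw [← hfv₂, ← hfv₃, hv23]
          have hsufpq := hsuf (by omega) (by omega) hqq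
          exact Nat.findGreatest_is_greatest (show q' < q'+1 by omega)
            (show q'+1 ≤ n by omega) ⟨by omega, p+1, by omega, hsufpq⟩
        exact ⟨hval, fun i j hi hj hij => hinjℓ i j (by omega) (by omega) (hpre hi hj hij)⟩
      · push_neg at hBad
        obtain ⟨qs, hqsmem, hqsnot⟩ := hBad
        have hqsimg : qs ∉ A'.image f := by
          intro hc
          obtain ⟨v, hv, hfv⟩ := Finset.mem_image.mp hc
          exact hqsnot v hv hfv
        have hcard1 : A'.card + 1 = (Wset σ τ ℓ).card := by
          have h1 : A'.card = (Wset σ τ ℓ).card - 1 := by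
            rw [hA']; exact Finset.card_erase_of_mem hu'mem
          have hpos : 0 < (Wset σ τ ℓ).card := Finset.card_pos.mpr ⟨u', hu'mem⟩
          omega
        calc (Wset σ τ ℓ).card = A'.card + 1 := hcard1.symm
          _ = (A'.image f).card + 1 := by rw [Finset.card_image_of_injOn hinjA']
          _ = (insert qs (A'.image f)).card := (Finset.card_insert_of_notMem hqsimg).symm
          _ ≤ (Wset σ τ (ℓ+1)).card := Finset.card_le_card (by
              intro q hq
              rcases Finset.mem_insert.mp hq with h | h
              · rwa [h]
              · exact himg h)

theorem rankCard_eq {m n : ℕ} (σ : Perm' m) (τ : Perm' n) {r : ℕ} (hr : m + r ≤ n) :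
    rankCard σ τ r = (Wset σ τ (m + r)).card := by
  have hset : ((permsUpTo n).filter fun p => pLE ⟨m, σ⟩ p ∧ pLE p ⟨n, τ⟩ ∧ p.1 = m + r)
      = (Wset σ τ (m+r)).image (Sigma.mk (m+r)) := by
    ext p
    simp only [Finset.mem_filter, Finset.mem_image]
    constructor
    · rintro ⟨hmem, hσ, hτ, hlen⟩
      obtain ⟨p1, p2⟩ := p
      simp only at hlen
      subst hlen
      obtain ⟨i, hocc⟩ := hτ
      have hwin : p2 = window τ i (m+r) := eq_window_of_occursAt hocc
      refine ⟨p2, ?_, rfl⟩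
      rw [mem_Wset σ τ hr]
      exact ⟨i, hocc.1, by rw [← hwin]; exact hσ, hwin.symm⟩
    · rintro ⟨q, hq, rfl⟩
      obtain ⟨i, hi, hv, hw⟩ := (mem_Wset σ τ hr).mp hq
      refine ⟨?_, ?_, ⟨i, ?_⟩, rfl⟩
      · simp only [permsUpTo, Finset.mem_sigma, Finset.mem_range, Finset.mem_univ, and_true]
        omega
      · show PattLE σ q
        rwa [hw] at hv
      · show OccursAt q τ i
        rw [← hw]
        exact window_occursAt τ hi
  rw [rankCard, hset, Finset.card_image_of_injective _ sigma_mk_injective]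

theorem mono_of_step (a : ℕ → ℕ) (k : ℕ) (hstep : ∀ r < k, a r ≤ a (r+1)) :
    ∀ i j : ℕ, i ≤ j → j ≤ k → a i ≤ a j := by
  intro i j hij hjk
  induction j with
  | zero =>
    have : i = 0 := by omega
    rw [this]
  | succ j ih =>
    rcases Nat.lt_or_ge i (j+1) with h' | h'
    · exact le_trans (ih (by omega) (by omega)) (hstep j (by omega))
    · have : i = j + 1 := by omega
      rw [this]

theorem unimodal_abstract (N : ℕ) (a : ℕ → ℕ)
    (key1 : ∀ r < N, min (a r) (N - r) ≤ a (r+1))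
    (key2 : ∀ r < N, a (r+1) ≤ N - r) :
    ∃ k ≤ N, (∀ i j : ℕ, i ≤ j → j ≤ k → a i ≤ a j) ∧
      (∀ i j : ℕ, k ≤ i → i ≤ j → j ≤ N → a j ≤ a i) := by
  by_cases h : ∃ r, r < N ∧ a (r+1) < a r
  · set k := Nat.find h with hk
    obtain ⟨hkN, hdec⟩ := Nat.find_spec h
    have hstep : ∀ r < k, a r ≤ a (r+1) := by
      intro r hr
      have := Nat.find_min h hr
      push_neg at this
      by_cases hrN : r < N
      · exact this hrN
      · have := key1 r; omega
    have htail : ∀ r, k < r → r ≤ N → a r = N - r + 1 := by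
      intro r
      induction r with
      | zero => omega
      | succ r ih =>
        intro hkr hrN
        rcases Nat.lt_or_ge k r with h' | h' 
        · have har : a r = N - r + 1 := ih h' (by omega)
          have h1 := key1 r (by omega)
          have h2 := key2 r (by omega)
          rw [har] at h1
          have hminv : min (N - r + 1) (N - r) = N - r := by omega
          rw [hminv] at h1
          omega
        · have hrk : r = k := by omega
          have hdec' : a (r+1) < a r := by rw [hrk]; exact hdec
          have h1 := key1 r (by omega)
          have h2 := key2 r (by omega)
          rcases le_or_gt (a r) (N - r) with h3 | h3
          · rw [min_eq_left h3] at h1; omega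
          · rw [min_eq_right (by omega)] at h1; omega
    refine ⟨k, by omega, mono_of_step a k hstep, ?_⟩
    intro i j hki hij hjN
    rcases Nat.eq_or_lt_of_le hij with heq | hlt
    · rw [heq]
    · have haj : a j = N - j + 1 := htail j (by omega) hjN
      rcases Nat.eq_or_lt_of_le hki with heq2 | hik
      · have hiN : i < N := by omega
        have hdec' : a (i+1) < a i := by rw [← heq2]; exact hdec
        have hai1 : a (i+1) = N - (i+1) + 1 := htail (i+1) (by omega) (by omega)
        omega
      · have hai : a i = N - i + 1 := htail i (by omega) (by omega)
        omega
  · push_neg at h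
    refine ⟨N, le_refl _, mono_of_step a N (fun r hr => h r hr), ?_⟩
    intro i j hNi hij hjN
    have h1 : i = N := by omega
    have h2 : j = N := by omega
    rw [h1, h2]


/-- Corollary 5.3: every interval `[σ,τ]` is rank-unimodal. -/
theorem stmt9 {m n : ℕ} (hm : 1 ≤ m) (σ : Perm' m) (τ : Perm' n) (hle : PattLE σ τ) :
    ∃ k ≤ n - m,
      (∀ i j : ℕ, i ≤ j → j ≤ k → rankCard σ τ i ≤ rankCard σ τ j) ∧
      (∀ i j : ℕ, k ≤ i → i ≤ j → j ≤ n - m → rankCard σ τ j ≤ rankCard σ τ i) := by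
  have hmn : m ≤ n := by
    obtain ⟨i, hi, -⟩ := hle
    omega
  set N := n - m with hN
  set a : ℕ → ℕ := fun r => rankCard σ τ r with ha
  have haW : ∀ r, r ≤ N → a r = (Wset σ τ (m + r)).card := by
    intro r hr
    exact rankCard_eq σ τ (by omega)
  have key1 : ∀ r < N, min (a r) (N - r) ≤ a (r+1) := by
    intro r hr
    rw [haW r (by omega), haW (r+1) (by omega)]
    have := main_step σ τ (ℓ := m + r) (by omega) (by omega)
    rw [show m + (r+1) = (m+r) + 1 by omega]
    rw [show N - r = n - (m + r) by omega]
    exact this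
  have key2 : ∀ r < N, a (r+1) ≤ N - r := by
    intro r hr
    rw [haW (r+1) (by omega)]
    have := Wset_card_le σ τ (m + (r+1))
    have harr : n - (m + (r+1)) + 1 = N - r := by omega
    omega
  exact unimodal_abstract N a key1 key2

end
end

section
/- Every interval [σ,τ] in the consecutive pattern poset is strongly Sperner: letting N = |τ|−|σ| and a_r = #{π : σ ≤ π ≤ τ, |π| = |σ|+r} for 0 ≤ r ≤ N, for every integer k with 1 ≤ k ≤ N+1, the maximum cardinality of a subset of [σ,τ] expressible as a union of k antichains of [σ,τ] equals the sum of the k largest values among a_0, a_1, …, a_N. -/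
open scoped Classical

noncomputable section

-- embedding of window index
def emb {l n : ℕ} (i : ℕ) (h : i + l ≤ n) (a : Fin l) : Fin n :=
  ⟨i + a, by have := a.isLt; omega⟩

def OccAt {l n : ℕ} (p : Perm' l) (τ : Perm' n) (i : ℕ) (h : i + l ≤ n) : Prop :=
  ∀ a b : Fin l, p a < p b ↔ τ (emb i h a) < τ (emb i h b)

lemma occursAt_iff {l n : ℕ} (p : Perm' l) (τ : Perm' n) (i : ℕ) :
    OccursAt p τ i ↔ ∃ h : i + l ≤ n, OccAt p τ i h := by
  constructor
  · rintro ⟨h, hh⟩; exact ⟨h, hh⟩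
  · rintro ⟨h, hh⟩; exact ⟨h, hh⟩

lemma occAt_refl {l : ℕ} (p : Perm' l) : OccAt p p 0 (by omega) := by
  intro a b
  have : ∀ a : Fin l, emb 0 (by omega : 0 + l ≤ l) a = a := by
    intro a; apply Fin.ext; simp [emb]
  rw [this a, this b]

lemma pLE_refl (p : PermS) : pLE p p := ⟨0, (occursAt_iff _ _ _).2 ⟨by omega, occAt_refl p.2⟩⟩

lemma occAt_trans {lp lq n : ℕ} {p : Perm' lp} {q : Perm' lq} {τ : Perm' n} {i j : ℕ}
    {hj : j + lp ≤ lq} {hi : i + lq ≤ n} (h1 : OccAt p q j hj) (h2 : OccAt q τ i hi) :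
    OccAt p τ (i + j) (by omega) := by
  intro a b
  have key : ∀ a : Fin lp, emb i hi (emb j hj a) = emb (i + j) (by omega) a := by
    intro a; apply Fin.ext; simp [emb]; omega
  rw [h1 a b, h2 (emb j hj a) (emb j hj b), key a, key b]

lemma pLE_trans {p q r : PermS} (h1 : pLE p q) (h2 : pLE q r) : pLE p r := by
  obtain ⟨j, hj⟩ := h1; obtain ⟨i, hi⟩ := h2
  rw [occursAt_iff] at hj hi
  obtain ⟨hj', hja⟩ := hj; obtain ⟨hi', hia⟩ := hi
  exact ⟨i + j, (occursAt_iff _ _ _).2 ⟨by omega, occAt_trans hja hia⟩⟩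

lemma occAt_sub {lp lq n : ℕ} {p : Perm' lp} {q : Perm' lq} {τ : Perm' n} {i i' : ℕ}
    {hi : i + lq ≤ n} {hi' : i' + lp ≤ n} (hq : OccAt q τ i hi) (hp : OccAt p τ i' hi')
    (hge : i ≤ i') (hfit : i' + lp ≤ i + lq) :
    OccAt p q (i' - i) (by omega) := by
  intro a b
  have key : ∀ a : Fin lp, emb i hi (emb (i' - i) (by omega) a) = emb i' hi' a := by
    intro a; apply Fin.ext; simp [emb]; omega
  rw [hp a b, ← key a, ← key b, ← hq]

-- strict mono bijection on Fin is identity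
lemma strictMono_fin_id {l : ℕ} (f : Fin l → Fin l) (hmono : StrictMono f)
    (hsurj : Function.Surjective f) : ∀ x, f x = x := by
  have h1 : Set.range f = Set.range (id : Fin l → Fin l) := by
    rw [Set.range_id]; exact Set.range_eq_univ.2 hsurj
  have inst : WellFoundedLT (Fin l) := inferInstance
  have h2 : f = (id : Fin l → Fin l) :=
    (@StrictMono.range_inj (Fin l) (Fin l) _ _ inst f id hmono strictMono_id).1 h1
  intro x; exact congrFun h2 x

lemma perm_eq_of_iff {l : ℕ} (p q : Perm' l) (h : ∀ a b, p a < p b ↔ q a < q b) : p = q := by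
  have hm : StrictMono (fun x => q (p.symm x)) := by
    intro x y hxy
    have : p (p.symm x) < p (p.symm y) := by
      rwa [Equiv.apply_symm_apply, Equiv.apply_symm_apply]
    exact (h _ _).1 this
  have hs : Function.Surjective (fun x => q (p.symm x)) :=
    q.surjective.comp p.symm.surjective
  have hid := strictMono_fin_id _ hm hs
  apply Equiv.ext
  intro x
  have := hid (p x)
  simp only [Equiv.symm_apply_apply] at this
  exact this.symm

lemma occAt_unique {l n : ℕ} {p q : Perm' l} {τ : Perm' n} {i : ℕ} {h h' : i + l ≤ n}
    (hp : OccAt p τ i h) (hq : OccAt q τ i h') : p = q := by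
  apply perm_eq_of_iff
  intro a b
  rw [hp a b, hq a b]

lemma pLE_len {p q : PermS} (h : pLE p q) : p.1 ≤ q.1 := by
  obtain ⟨i, hi⟩ := h; rw [occursAt_iff] at hi; obtain ⟨h', _⟩ := hi; omega

lemma pLE_antisymm_len {p q : PermS} (h : pLE p q) (hlen : p.1 = q.1) : p = q := by
  obtain ⟨lp, pp⟩ := p; obtain ⟨lq, qq⟩ := q
  simp only at hlen
  subst hlen
  obtain ⟨i, hi⟩ := h
  rw [occursAt_iff] at hi
  obtain ⟨h', ha⟩ := hi
  have h'' : i + lp ≤ lp := h'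
  have hi0 : i = 0 := by omega
  subst hi0
  have : pp = qq := occAt_unique ha (occAt_refl qq)
  rw [this]


def winmap {n : ℕ} (τ : Perm' n) (i l : ℕ) (h : i + l ≤ n) : Fin l → Fin n :=
  fun a => τ (emb i h a)

lemma winmap_inj {n : ℕ} (τ : Perm' n) (i l : ℕ) (h : i + l ≤ n) :
    Function.Injective (winmap τ i l h) := by
  intro a b hab
  have h2 : (emb i h a) = (emb i h b) := τ.injective hab
  have h3 : (emb i h a).val = (emb i h b).val := congrArg Fin.val h2
  simp only [emb] at h3
  exact Fin.ext (by omega)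

def winset {n : ℕ} (τ : Perm' n) (i l : ℕ) (h : i + l ≤ n) : Finset (Fin n) :=
  Finset.image (winmap τ i l h) Finset.univ

lemma winset_card {n : ℕ} (τ : Perm' n) (i l : ℕ) (h : i + l ≤ n) :
    (winset τ i l h).card = l := by
  rw [winset, Finset.card_image_of_injective _ (winmap_inj τ i l h), Finset.card_univ,
    Fintype.card_fin]

lemma winmap_mem {n : ℕ} (τ : Perm' n) (i l : ℕ) (h : i + l ≤ n) (a : Fin l) :
    winmap τ i l h a ∈ winset τ i l h := by
  rw [winset, Finset.mem_image]; exact ⟨a, Finset.mem_univ a, rfl⟩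

def stdFun {n : ℕ} (τ : Perm' n) (i l : ℕ) (h : i + l ≤ n) : Fin l → Fin l :=
  fun a => ((winset τ i l h).orderIsoOfFin (winset_card τ i l h)).symm
    ⟨winmap τ i l h a, winmap_mem τ i l h a⟩

lemma stdFun_lt_iff {n : ℕ} (τ : Perm' n) (i l : ℕ) (h : i + l ≤ n) (a b : Fin l) :
    stdFun τ i l h a < stdFun τ i l h b ↔ τ (emb i h a) < τ (emb i h b) := by
  simp only [stdFun]
  rw [OrderIso.lt_iff_lt]
  exact Subtype.mk_lt_mk

lemma stdFun_inj {n : ℕ} (τ : Perm' n) (i l : ℕ) (h : i + l ≤ n) :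
    Function.Injective (stdFun τ i l h) := by
  intro a b hab
  rcases lt_trichotomy a b with hc | hc | hc
  · have h2 : τ (emb i h a) ≠ τ (emb i h b) := by
      intro he
      exact absurd (winmap_inj τ i l h he) (Fin.ne_of_lt hc)
    rcases h2.lt_or_gt with h3 | h3
    · exact absurd hab (Fin.ne_of_lt ((stdFun_lt_iff τ i l h a b).2 h3))
    · exact absurd hab.symm (Fin.ne_of_lt ((stdFun_lt_iff τ i l h b a).2 h3))
  · exact hc
  · have h2 : τ (emb i h a) ≠ τ (emb i h b) := by
      intro he
      exact absurd (winmap_inj τ i l h he) (Fin.ne_of_gt hc)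
    rcases h2.lt_or_gt with h3 | h3
    · exact absurd hab (Fin.ne_of_lt ((stdFun_lt_iff τ i l h a b).2 h3))
    · exact absurd hab.symm (Fin.ne_of_lt ((stdFun_lt_iff τ i l h b a).2 h3))

def stdPerm {n : ℕ} (τ : Perm' n) (i l : ℕ) (h : i + l ≤ n) : Perm' l :=
  Equiv.ofBijective (stdFun τ i l h)
    ((Fintype.bijective_iff_injective_and_card _).2 ⟨stdFun_inj τ i l h, rfl⟩)

lemma stdPerm_occ {n : ℕ} (τ : Perm' n) (i l : ℕ) (h : i + l ≤ n) :
    OccAt (stdPerm τ i l h) τ i h := by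
  intro a b
  have ha : (stdPerm τ i l h) a = stdFun τ i l h a := rfl
  have hb : (stdPerm τ i l h) b = stdFun τ i l h b := rfl
  rw [ha, hb, stdFun_lt_iff]


section Interval

variable {m n : ℕ} (σ : Perm' m) (τ : Perm' n)

/-- leftmost occurrence start of `p` in `τ` (0 if not contained). -/
def Lf (p : PermS) : ℕ := if hp : pLE p ⟨n, τ⟩ then Nat.find hp else 0

/-- end of the leftmost occurrence. -/
def Ef (p : PermS) : ℕ := Lf τ p + p.1

lemma Lf_occ {p : PermS} (hp : pLE p ⟨n, τ⟩) : OccursAt p.2 τ (Lf τ p) := by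
  rw [Lf, dif_pos hp]; exact Nat.find_spec hp

lemma Lf_min {p : PermS} (hp : pLE p ⟨n, τ⟩) {j : ℕ} (hj : OccursAt p.2 τ j) :
    Lf τ p ≤ j := by
  rw [Lf, dif_pos hp]; exact Nat.find_min' hp hj

lemma Ef_le_n {p : PermS} (hp : pLE p ⟨n, τ⟩) : Ef τ p ≤ n := by
  have := Lf_occ τ hp
  rw [occursAt_iff] at this
  obtain ⟨h, _⟩ := this
  rw [Ef]; omega

/-- window nesting implies pattern containment. -/
lemma win_le {p q : PermS} (hp : pLE p ⟨n, τ⟩) (hq : pLE q ⟨n, τ⟩)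
    (h1 : Lf τ q ≤ Lf τ p) (h2 : Ef τ p ≤ Ef τ q) : pLE p q := by
  have op := Lf_occ τ hp
  have oq := Lf_occ τ hq
  rw [occursAt_iff] at op oq
  obtain ⟨hip, hop⟩ := op
  obtain ⟨hiq, hoq⟩ := oq
  refine ⟨Lf τ p - Lf τ q, (occursAt_iff _ _ _).2 ⟨?_, occAt_sub hoq hop h1 ?_⟩⟩
  · rw [Ef] at h2; rw [Ef] at h2; omega
  · rw [Ef] at h2; rw [Ef] at h2; omega

/-- Pattern of a window containing `u`'s leftmost occurrence: containment and
exact leftmost position. -/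
lemma std_host (u : PermS) (hu : pLE u ⟨n, τ⟩) (s W : ℕ) (h1 : s + W ≤ n)
    (h2 : s ≤ Lf τ u) (h3 : Lf τ u + u.1 ≤ s + W) :
    pLE u ⟨W, stdPerm τ s W h1⟩ ∧ pLE (⟨W, stdPerm τ s W h1⟩ : PermS) ⟨n, τ⟩ ∧
      Lf τ (⟨W, stdPerm τ s W h1⟩ : PermS) = s := by
  have hoccF : OccAt (stdPerm τ s W h1) τ s h1 := stdPerm_occ τ s W h1
  have hou := Lf_occ τ hu
  rw [occursAt_iff] at hou
  obtain ⟨hiu, hoau⟩ := hou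
  have hsub : OccAt u.2 (stdPerm τ s W h1) (Lf τ u - s) (by omega) :=
    occAt_sub hoccF hoau h2 h3
  have hle : pLE u ⟨W, stdPerm τ s W h1⟩ :=
    ⟨Lf τ u - s, (occursAt_iff _ _ _).2 ⟨(show Lf τ u - s + u.1 ≤ W by omega), hsub⟩⟩
  have hFτ : pLE (⟨W, stdPerm τ s W h1⟩ : PermS) ⟨n, τ⟩ :=
    ⟨s, (occursAt_iff _ _ _).2 ⟨(show s + W ≤ n from h1), hoccF⟩⟩
  refine ⟨hle, hFτ, le_antisymm
    (Lf_min τ hFτ ((occursAt_iff _ _ _).2 ⟨(show s + W ≤ n from h1), hoccF⟩)) ?_⟩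
  -- lower bound on leftmost occurrence of the host
  have hoF := Lf_occ τ hFτ
  rw [occursAt_iff] at hoF
  obtain ⟨hjF, hoaF⟩ := hoF
  have hjF' : Lf τ (⟨W, stdPerm τ s W h1⟩ : PermS) + W ≤ n := hjF
  have htr : OccAt u.2 τ (Lf τ (⟨W, stdPerm τ s W h1⟩ : PermS) + (Lf τ u - s)) (by omega) :=
    occAt_trans hsub hoaF
  have hmin := Lf_min τ hu ((occursAt_iff _ _ _).2
    ⟨(show Lf τ (⟨W, stdPerm τ s W h1⟩ : PermS) + (Lf τ u - s) + u.1 ≤ n by omega), htr⟩)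
  omega

/-- The hosting lemma: an antichain in `[σ,τ]` has at most as many elements as the
number of interval elements of the maximal length `W`. -/
lemma host_card (M : Finset PermS)
    (hM1 : ∀ u ∈ M, pLE ⟨m, σ⟩ u ∧ pLE u ⟨n, τ⟩)
    (hM2 : ∀ u ∈ M, ∀ v ∈ M, u ≠ v → ¬ pLE u v)
    (u0 : PermS) (hu0 : u0 ∈ M) (hW : ∀ u ∈ M, u.1 ≤ u0.1) :
    M.card ≤ rankCard σ τ (u0.1 - m) := by
  set W := u0.1 with hWdef
  have hmW : m ≤ W := pLE_len (hM1 u0 hu0).1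
  have hWn : W ≤ n := pLE_len (hM1 u0 hu0).2
  have hEu0 : Ef τ u0 ≤ n := Ef_le_n τ (hM1 u0 hu0).2
  have hEdef : ∀ p : PermS, Ef τ p = Lf τ p + p.1 := fun p => rfl
  have caseA_lt : ∀ u ∈ M, u ≠ u0 → Ef τ u ≤ Ef τ u0 → Lf τ u < Lf τ u0 := by
    intro u hu hne hE
    by_contra hcon
    push_neg at hcon
    exact hM2 u hu u0 hu0 hne (win_le τ (hM1 u hu).2 (hM1 u0 hu0).2 hcon hE)
  set s : PermS → ℕ := fun u => if Ef τ u ≤ Ef τ u0 then Lf τ u else Ef τ u - W with hsdef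
  have hside : ∀ u ∈ M, s u + W ≤ n ∧ s u ≤ Lf τ u ∧ Lf τ u + u.1 ≤ s u + W := by
    intro u hu
    have hE := Ef_le_n τ (hM1 u hu).2
    have hlen : u.1 ≤ W := hW u hu
    have e1 := hEdef u
    have e2 := hEdef u0
    by_cases hc : Ef τ u ≤ Ef τ u0
    · simp only [hsdef, if_pos hc]
      rcases eq_or_ne u u0 with rfl | hne
      · exact ⟨by omega, le_refl _, by omega⟩
      · have := caseA_lt u hu hne hc
        exact ⟨by omega, le_refl _, by omega⟩
    · simp only [hsdef, if_neg hc]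
      push_neg at hc
      exact ⟨by omega, by omega, by omega⟩
  set F : PermS → PermS := fun u =>
    if h : s u + W ≤ n then ⟨W, stdPerm τ (s u) W h⟩ else u with hFdef
  have hFspec : ∀ u ∈ M, (F u).1 = W ∧ pLE ⟨m, σ⟩ (F u) ∧ pLE (F u) ⟨n, τ⟩ ∧
      Lf τ (F u) = s u := by
    intro u hu
    obtain ⟨h1, h2, h3⟩ := hside u hu
    have hFu : F u = ⟨W, stdPerm τ (s u) W h1⟩ := by rw [hFdef]; simp only [dif_pos h1]
    obtain ⟨ha, hb, hc⟩ := std_host τ u (hM1 u hu).2 (s u) W h1 h2 h3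
    rw [hFu]
    exact ⟨rfl, pLE_trans (hM1 u hu).1 ha, hb, hc⟩
  have hinj : Set.InjOn F M := by
    intro u hu v hv hFuv
    obtain ⟨hu1, _, _, hu4⟩ := hFspec u hu
    obtain ⟨hv1, _, _, hv4⟩ := hFspec v hv
    have hs_eq : s u = s v := by rw [← hu4, ← hv4, hFuv]
    by_contra hne
    have key : ∀ a ∈ M, ∀ b ∈ M, a ≠ b → Lf τ b ≤ Lf τ a → Ef τ a ≤ Ef τ b → False := by
      intro a ha b hb hab hL hE
      exact hM2 a ha b hb hab (win_le τ (hM1 a ha).2 (hM1 b hb).2 hL hE)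
    have e1 := hEdef u
    have e2 := hEdef u0
    have e3 := hEdef v
    have hlenu : u.1 ≤ W := hW u hu
    have hlenv : v.1 ≤ W := hW v hv
    have hsu := hsdef
    by_cases hcu : Ef τ u ≤ Ef τ u0 <;> by_cases hcv : Ef τ v ≤ Ef τ u0
    · -- both case A : same leftmost start
      have hsu' : s u = Lf τ u := by simp only [hsdef, if_pos hcu]
      have hsv' : s v = Lf τ v := by simp only [hsdef, if_pos hcv]
      rcases le_total u.1 v.1 with hl | hl
      · exact key u hu v hv hne (by omega) (by omega)
      · exact key v hv u hu (Ne.symm hne) (by omega) (by omega)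
    · -- u case A, v case B
      have hsu' : s u = Lf τ u := by simp only [hsdef, if_pos hcu]
      have hsv' : s v = Ef τ v - W := by simp only [hsdef, if_neg hcv]
      push_neg at hcv
      rcases eq_or_ne u u0 with rfl | hne0
      · omega
      · have := caseA_lt u hu hne0 hcu
        omega
    · -- u case B, v case A
      have hsu' : s u = Ef τ u - W := by simp only [hsdef, if_neg hcu]
      have hsv' : s v = Lf τ v := by simp only [hsdef, if_pos hcv]
      push_neg at hcu
      rcases eq_or_ne v u0 with rfl | hne0
      · omega
      · have := caseA_lt v hv hne0 hcv
        omega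
    · -- both case B : same end
      have hsu' : s u = Ef τ u - W := by simp only [hsdef, if_neg hcu]
      have hsv' : s v = Ef τ v - W := by simp only [hsdef, if_neg hcv]
      push_neg at hcu hcv
      rcases le_total u.1 v.1 with hl | hl
      · exact key u hu v hv hne (by omega) (by omega)
      · exact key v hv u hu (Ne.symm hne) (by omega) (by omega)
  -- conclude via injOn into the rank-W set
  have hsub : ∀ u ∈ M, F u ∈ (permsUpTo n).filter
      fun p => pLE ⟨m, σ⟩ p ∧ pLE p ⟨n, τ⟩ ∧ p.1 = m + (u0.1 - m) := by
    intro u hu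
    obtain ⟨h1, h2, h3, _⟩ := hFspec u hu
    rw [Finset.mem_filter]
    refine ⟨?_, h2, h3, by omega⟩
    rw [permsUpTo, Finset.mem_sigma]
    exact ⟨Finset.mem_range.2 (by omega), Finset.mem_univ _⟩
  exact Finset.card_le_card_of_injOn F hsub hinj

/-- Main counting bound: a subset of the interval with no chain of more than `k`
elements has size at most the sum of `rankCard` over at most `k` ranks. -/
lemma main_bound (k : ℕ) : ∀ U : Finset PermS,
    (∀ u ∈ U, pLE ⟨m, σ⟩ u ∧ pLE u ⟨n, τ⟩) →
    (∀ C : Finset PermS, C ⊆ U → (∀ a ∈ C, ∀ b ∈ C, pLE a b ∨ pLE b a) → C.card ≤ k) →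
    ∃ T : Finset ℕ, T ⊆ Finset.range (n - m + 1) ∧ T.card ≤ k ∧
      (∀ r ∈ T, ∃ u ∈ U, m + r ≤ u.1) ∧ U.card ≤ ∑ r ∈ T, rankCard σ τ r := by
  induction k with
  | zero =>
    intro U hU hchain
    have hUe : U = ∅ := by
      by_contra h
      obtain ⟨u, hu⟩ := Finset.nonempty_iff_ne_empty.2 h
      have := hchain {u} (Finset.singleton_subset_iff.2 hu) ?_
      · simp at this
      · intro a ha b hb
        rw [Finset.mem_singleton] at ha hb
        subst ha; subst hb
        exact Or.inl (pLE_refl _)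
    subst hUe
    exact ⟨∅, Finset.empty_subset _, by simp, by simp, by simp⟩
  | succ k ih =>
    intro U hU hchain
    rcases U.eq_empty_or_nonempty with rfl | hne
    · exact ⟨∅, Finset.empty_subset _, by simp, by simp, by simp⟩
    · set M := U.filter (fun u => ∀ v ∈ U, pLE u v → v = u) with hMdef
      have hMsub : M ⊆ U := Finset.filter_subset _ _
      have claim_up : ∀ u ∈ U, ∃ w ∈ M, pLE u w := by
        intro u hu
        set S := U.filter (fun w => pLE u w) with hSdef
        have hSne : S.Nonempty := ⟨u, Finset.mem_filter.2 ⟨hu, pLE_refl u⟩⟩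
        obtain ⟨w, hwS, hwmax⟩ := S.exists_max_image (fun w => w.1) hSne
        rw [Finset.mem_filter] at hwS
        refine ⟨w, Finset.mem_filter.2 ⟨hwS.1, ?_⟩, hwS.2⟩
        intro v hv hwv
        have hvS : v ∈ S := Finset.mem_filter.2 ⟨hv, pLE_trans hwS.2 hwv⟩
        exact pLE_antisymm_len hwv (le_antisymm (pLE_len hwv) (hwmax v hvS)) |>.symm
      have hMne : M.Nonempty := by
        obtain ⟨u, hu⟩ := hne
        obtain ⟨w, hw, _⟩ := claim_up u hu
        exact ⟨w, hw⟩
      obtain ⟨u0, hu0M, hu0max⟩ := M.exists_max_image (fun w => w.1) hMne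
      have hWlen : ∀ u ∈ U, u.1 ≤ u0.1 := by
        intro u hu
        obtain ⟨w, hw, hlw⟩ := claim_up u hu
        exact le_trans (pLE_len hlw) (hu0max w hw)
      have hM2 : ∀ u ∈ M, ∀ v ∈ M, u ≠ v → ¬ pLE u v := by
        intro u hu v hv hne' hle'
        have := (Finset.mem_filter.1 hu).2 v (hMsub hv) hle'
        exact hne' this.symm
      have hhost := host_card σ τ M (fun u hu => hU u (hMsub hu)) hM2 u0 hu0M
        (fun u hu => hu0max u hu)
      have hmu0 : m ≤ u0.1 := pLE_len (hU u0 (hMsub hu0M)).1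
      have hnu0 : u0.1 ≤ n := pLE_len (hU u0 (hMsub hu0M)).2
      set U' := U \ M with hU'def
      have hU'sub : U' ⊆ U := Finset.sdiff_subset
      have hlenU' : ∀ u ∈ U', u.1 < u0.1 := by
        intro u hu
        rw [hU'def, Finset.mem_sdiff] at hu
        obtain ⟨huU, huM⟩ := hu
        rcases lt_or_eq_of_le (hWlen u huU) with h | h
        · exact h
        · exfalso
          obtain ⟨w, hw, hlw⟩ := claim_up u huU
          have : u = w := pLE_antisymm_len hlw
            (le_antisymm (pLE_len hlw) (by rw [h]; exact hu0max w hw))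
          exact huM (this ▸ hw)
      have hchain' : ∀ C : Finset PermS, C ⊆ U' →
          (∀ a ∈ C, ∀ b ∈ C, pLE a b ∨ pLE b a) → C.card ≤ k := by
        intro C hCsub hCcomp
        by_contra hcon
        push_neg at hcon
        have hCne : C.Nonempty := Finset.card_pos.1 (by omega)
        obtain ⟨t, htC, htmax⟩ := C.exists_max_image (fun w => w.1) hCne
        have hallt : ∀ c ∈ C, pLE c t := by
          intro c hc
          rcases hCcomp c hc t htC with h | h
          · exact h
          · have : t = c := pLE_antisymm_len h (le_antisymm (pLE_len h) (htmax c hc))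
            rw [← this]; exact pLE_refl t
        have htU' := hCsub htC
        rw [hU'def, Finset.mem_sdiff] at htU'
        obtain ⟨w, hwM, hlw⟩ := claim_up t htU'.1
        have hwC : w ∉ C := by
          intro hwC'
          have := hCsub hwC'
          rw [hU'def, Finset.mem_sdiff] at this
          exact this.2 hwM
        have hcard : (insert w C).card = C.card + 1 := Finset.card_insert_of_notMem hwC
        have := hchain (insert w C) ?_ ?_
        · omega
        · intro x hx
          rcases Finset.mem_insert.1 hx with rfl | hx'
          · exact hMsub hwM
          · exact hU'sub (hCsub hx')
        · intro a ha b hb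
          rcases Finset.mem_insert.1 ha with rfl | ha' <;>
            rcases Finset.mem_insert.1 hb with rfl | hb'
          · exact Or.inl (pLE_refl _)
          · exact Or.inr (pLE_trans (hallt b hb') hlw)
          · exact Or.inl (pLE_trans (hallt a ha') hlw)
          · exact hCcomp a ha' b hb'
      obtain ⟨T', hT'1, hT'2, hT'3, hT'4⟩ := ih U' (fun u hu => hU u (hU'sub hu)) hchain'
      set ρ := u0.1 - m with hρdef
      have hρT' : ρ ∉ T' := by
        intro hmem
        obtain ⟨u, hu, hru⟩ := hT'3 ρ hmem
        have := hlenU' u hu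
        omega
      refine ⟨insert ρ T', ?_, ?_, ?_, ?_⟩
      · intro x hx
        rcases Finset.mem_insert.1 hx with rfl | hx'
        · exact Finset.mem_range.2 (by omega)
        · exact hT'1 hx'
      · rw [Finset.card_insert_of_notMem hρT']; omega
      · intro r hr
        rcases Finset.mem_insert.1 hr with rfl | hr'
        · exact ⟨u0, hMsub hu0M, by omega⟩
        · obtain ⟨u, hu, hru⟩ := hT'3 r hr'
          exact ⟨u, hU'sub hu, hru⟩
      · rw [Finset.sum_insert hρT']
        have hcards : U'.card = U.card - M.card := Finset.card_sdiff_of_subset hMsub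
        have hMle : M.card ≤ U.card := Finset.card_le_card hMsub
        omega

end Interval


/-- Theorem 5.5: every interval `[σ,τ]` is strongly Sperner: for every
`1 ≤ k ≤ N + 1` (with `N = |τ| - |σ|`), the maximum cardinality of a union of `k`
antichains of `[σ,τ]` equals the maximum possible sum of `k` of the rank sizes, i.e. the
sum of the `k` largest rank sizes. -/
theorem stmt10 {m n : ℕ} (hm : 1 ≤ m) (σ : Perm' m) (τ : Perm' n) (hle : PattLE σ τ)
    (k : ℕ) (hk1 : 1 ≤ k) (hk2 : k ≤ n - m + 1) :
    ∃ c : ℕ,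
      IsGreatest {c' : ℕ | ∃ A : Fin k → Finset PermS,
          (∀ i, ∀ p ∈ A i, pLE ⟨m, σ⟩ p ∧ pLE p ⟨n, τ⟩) ∧
          (∀ i, ∀ p ∈ A i, ∀ q ∈ A i, p ≠ q → ¬ pLE p q ∧ ¬ pLE q p) ∧
          c' = (Finset.univ.biUnion A).card} c ∧
      IsGreatest {s : ℕ | ∃ T : Finset ℕ, T ⊆ Finset.range (n - m + 1) ∧ T.card = k ∧
          s = ∑ r ∈ T, rankCard σ τ r} c := by
  classical
  have hmn : m ≤ n := pLE_len (p := ⟨m, σ⟩) (q := ⟨n, τ⟩) hle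
  -- the candidate maximum
  set S2 : Finset ℕ := ((Finset.range (n - m + 1)).powersetCard k).image
    (fun T => ∑ r ∈ T, rankCard σ τ r) with hS2def
  have hS2ne : S2.Nonempty := by
    apply Finset.Nonempty.image
    rw [Finset.powersetCard_nonempty, Finset.card_range]
    exact hk2
  set c := S2.max' hS2ne with hcdef
  have hub2 : ∀ T : Finset ℕ, T ⊆ Finset.range (n - m + 1) → T.card = k →
      (∑ r ∈ T, rankCard σ τ r) ≤ c := by
    intro T h1 h2
    apply Finset.le_max'
    rw [hS2def, Finset.mem_image]
    exact ⟨T, Finset.mem_powersetCard.2 ⟨h1, h2⟩, rfl⟩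
  obtain ⟨T0, hT0mem, hT0sum⟩ := Finset.mem_image.1 (S2.max'_mem hS2ne)
  rw [Finset.mem_powersetCard] at hT0mem
  obtain ⟨hT0sub, hT0card⟩ := hT0mem
  -- rank sets
  set Rset : ℕ → Finset PermS := fun r => (permsUpTo n).filter
    (fun p => pLE ⟨m, σ⟩ p ∧ pLE p ⟨n, τ⟩ ∧ p.1 = m + r) with hRdef
  have hRcard : ∀ r, (Rset r).card = rankCard σ τ r := fun r => rfl
  refine ⟨c, ⟨?_, ?_⟩, ⟨⟨T0, hT0sub, hT0card, hT0sum.symm⟩, ?_⟩⟩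
  · -- c is attained by a union of k antichains: the rank sets over T0
    set e : Fin k → ℕ := fun i => ((T0.orderIsoOfFin hT0card) i : ℕ) with hedef
    have he_inj : Function.Injective e := by
      intro i j hij
      exact (T0.orderIsoOfFin hT0card).injective (Subtype.val_injective hij)
    have he_mem : ∀ i, e i ∈ T0 := fun i => ((T0.orderIsoOfFin hT0card) i).2
    refine ⟨fun i => Rset (e i), ?_, ?_, ?_⟩
    · intro i p hp
      rw [hRdef, Finset.mem_filter] at hp
      exact ⟨hp.2.1, hp.2.2.1⟩
    · intro i p hp q hq hpq
      rw [hRdef, Finset.mem_filter] at hp hq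
      constructor
      · intro hcon
        exact hpq (pLE_antisymm_len hcon (by omega))
      · intro hcon
        exact hpq (pLE_antisymm_len hcon (by omega)).symm
    · rw [Finset.card_biUnion]
      · rw [hcdef, ← hT0sum]
        have : ∀ i : Fin k, (Rset (e i)).card = rankCard σ τ (e i) := fun i => rfl
        calc ∑ r ∈ T0, rankCard σ τ r
            = ∑ x : T0, rankCard σ τ x.1 := (Finset.sum_coe_sort T0 _).symm
          _ = ∑ i : Fin k, rankCard σ τ (e i) :=
              (Fintype.sum_equiv (T0.orderIsoOfFin hT0card).toEquiv
                (fun i => rankCard σ τ (e i)) (fun x => rankCard σ τ x.1)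
                (fun i => rfl)).symm
          _ = ∑ i : Fin k, (Rset (e i)).card := rfl
      · intro i _ j _ hij
        show Disjoint (Rset (e i)) (Rset (e j))
        rw [Finset.disjoint_left]
        intro p hp hq
        rw [hRdef, Finset.mem_filter] at hp hq
        have : e i = e j := by omega
        exact hij (he_inj this)
  · -- upper bound on unions of k antichains
    rintro c' ⟨A, hA1, hA2, rfl⟩
    set U := Finset.univ.biUnion A with hUdef
    have hU : ∀ u ∈ U, pLE ⟨m, σ⟩ u ∧ pLE u ⟨n, τ⟩ := by
      intro u hu
      rw [hUdef, Finset.mem_biUnion] at hu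
      obtain ⟨i, _, hi⟩ := hu
      exact hA1 i u hi
    have hchain : ∀ C : Finset PermS, C ⊆ U →
        (∀ a ∈ C, ∀ b ∈ C, pLE a b ∨ pLE b a) → C.card ≤ k := by
      intro C hCsub hCcomp
      have hfin : (0 : ℕ) < k := hk1
      set f : PermS → Fin k := fun p =>
        if h : ∃ i, p ∈ A i then h.choose else ⟨0, hfin⟩ with hfdef
      have hf : ∀ p ∈ C, p ∈ A (f p) := by
        intro p hp
        have := hCsub hp
        rw [hUdef, Finset.mem_biUnion] at this
        obtain ⟨i, _, hi⟩ := this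
        have hex : ∃ i, p ∈ A i := ⟨i, hi⟩
        rw [hfdef]
        simp only [dif_pos hex]
        exact hex.choose_spec
      have hinj : Set.InjOn f C := by
        intro p hp q hq hpq
        by_contra hne
        have hcomp := hCcomp p hp q hq
        have h2 := hA2 (f p) p (hf p hp) q (by rw [hpq]; exact hf q hq) hne
        rcases hcomp with h | h
        · exact h2.1 h
        · exact h2.2 h
      calc C.card ≤ (Finset.univ : Finset (Fin k)).card :=
            Finset.card_le_card_of_injOn f (fun _ _ => Finset.mem_univ _) hinj
        _ = k := by rw [Finset.card_univ, Fintype.card_fin]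
    obtain ⟨T, hT1, hT2, _, hT4⟩ := main_bound σ τ k U hU hchain
    obtain ⟨T2, hTsub2, hT2sub, hT2card⟩ := Finset.exists_subsuperset_card_eq hT1 hT2
      (by rw [Finset.card_range]; exact hk2)
    calc U.card ≤ ∑ r ∈ T, rankCard σ τ r := hT4
      _ ≤ ∑ r ∈ T2, rankCard σ τ r := Finset.sum_le_sum_of_subset hTsub2
      _ ≤ c := hub2 T2 hT2sub hT2card
  · -- upper bound for rank sums
    rintro s ⟨T, h1, h2, rfl⟩
    exact hub2 T h1 h2

end
end

section
/- For every n ≥ 3, the number of non-overlapping permutations of length n, i.e., #{τ ∈ S_n : |x(τ)| = 1}, is divisible by 4. -/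
open scoped Classical

noncomputable section

/-- `τ ⟨x,_⟩ < τ ⟨y,_⟩`, packaged as a proposition on natural-number indices. -/
private def cmpAt {n : ℕ} (τ : Perm' n) (x y : ℕ) : Prop :=
  ∃ (hx : x < n) (hy : y < n), τ ⟨x, hx⟩ < τ ⟨y, hy⟩

private lemma cmpAt_iff {n : ℕ} (τ : Perm' n) {x y : ℕ} (hx : x < n) (hy : y < n) :
    τ ⟨x, hx⟩ < τ ⟨y, hy⟩ ↔ cmpAt τ x y :=
  ⟨fun h => ⟨hx, hy, h⟩, fun ⟨_, _, h⟩ => h⟩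

private lemma cmpAt_irrefl {n : ℕ} (τ : Perm' n) (x : ℕ) : ¬ cmpAt τ x x := by
  rintro ⟨hx, hy, h⟩
  exact lt_irrefl _ h

private lemma cmpAt_not {n : ℕ} (τ : Perm' n) (x y : ℕ) (hx : x < n) (hy : y < n)
    (hxy : x ≠ y) : cmpAt τ x y ↔ ¬ cmpAt τ y x := by
  rw [← cmpAt_iff τ hx hy, ← cmpAt_iff τ hy hx]
  have hne : τ ⟨x, hx⟩ ≠ τ ⟨y, hy⟩ := fun h => hxy (by simpa [Fin.ext_iff] using τ.injective h)
  constructor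
  · exact fun h h' => lt_asymm h h'
  · intro h
    rcases hne.lt_or_gt with h' | h'
    · exact h'
    · exact absurd h' h

private lemma sort_inv_lt {m n : ℕ} (f : Fin m → Fin n) (hf : Function.Injective f)
    (a b : Fin m) : (Tuple.sort f)⁻¹ a < (Tuple.sort f)⁻¹ b ↔ f a < f b := by
  have hmono : StrictMono (f ∘ Tuple.sort f) :=
    (Tuple.monotone_sort f).strictMono_of_injective (hf.comp (Equiv.injective _))
  have key := hmono.lt_iff_lt (a := (Tuple.sort f)⁻¹ a) (b := (Tuple.sort f)⁻¹ b)
  simp only [Function.comp_apply, Equiv.Perm.inv_def, Equiv.apply_symm_apply] at key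
  exact key.symm

private lemma window_lt {n m : ℕ} (τ : Perm' n) (i : ℕ) (h : i + m ≤ n) (a b : Fin m) :
    window τ i m a < window τ i m b ↔ cmpAt τ (i + a) (i + b) := by
  have hinj : Function.Injective
      (fun a : Fin m => τ ⟨i + (a : ℕ), by have := a.isLt; omega⟩) := by
    intro x y hxy
    have h2 : (i + (x : ℕ)) = i + (y : ℕ) := by
      have h1 := τ.injective hxy
      simpa [Fin.ext_iff] using h1
    exact Fin.ext (by omega)
  unfold window
  rw [dif_pos h]
  exact (sort_inv_lt _ hinj a b).trans
    (cmpAt_iff τ (by have := a.isLt; omega) (by have := b.isLt; omega))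

private lemma window_eq {n m : ℕ} (τ τ' : Perm' n) (i j : ℕ) (hi : i + m ≤ n)
    (hj : j + m ≤ n) :
    window τ i m = window τ' j m ↔
      ∀ a b : ℕ, a < m → b < m → (cmpAt τ (i + a) (i + b) ↔ cmpAt τ' (j + a) (j + b)) := by
  constructor
  · intro h a b ha hb
    rw [← window_lt τ i hi ⟨a, ha⟩ ⟨b, hb⟩, ← window_lt τ' j hj ⟨a, ha⟩ ⟨b, hb⟩, h]
  · intro h
    set σ := window τ i m with hσ
    set σ' := window τ' j m with hσ'
    have key : ∀ a b : Fin m, σ a < σ b ↔ σ' a < σ' b := by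
      intro a b
      rw [hσ, hσ', window_lt τ i hi a b, window_lt τ' j hj a b]
      exact h a b a.isLt b.isLt
    have hst : StrictMono (fun x => σ' (σ⁻¹ x)) := by
      intro x y hxy
      rw [← key (σ⁻¹ x) (σ⁻¹ y)]
      simpa using hxy
    have hsurj : Function.Surjective (fun x => σ' (σ⁻¹ x)) :=
      σ'.surjective.comp σ⁻¹.surjective
    have inst : WellFoundedLT (Fin m) := inferInstance
    have hid : (fun x => σ' (σ⁻¹ x)) = (id : Fin m → Fin m) :=
      (@StrictMono.range_inj (Fin m) (Fin m) _ _ inst _ id hst strictMono_id).1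
        (by rw [hsurj.range_eq, Set.range_id])
    apply Equiv.ext
    intro x
    have h3 := congrFun hid (σ x)
    simpa using h3.symm

private lemma hasBifix_iff {n k : ℕ} (τ : Perm' n) :
    HasBifixLen τ k ↔ 0 < k ∧ k < n ∧
      ∀ a b : ℕ, a < k → b < k →
        (cmpAt τ (0 + a) (0 + b) ↔ cmpAt τ (n - k + a) (n - k + b)) := by
  unfold HasBifixLen
  refine and_congr_right fun hk => and_congr_right fun hkn => ?_
  exact window_eq τ τ 0 (n - k) (by omega) (by omega)

/-- The complement of a permutation. -/
private def compP {n : ℕ} (τ : Perm' n) : Perm' n := τ.trans Fin.revPerm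

/-- The reverse of a permutation. -/
private def revP {n : ℕ} (τ : Perm' n) : Perm' n := Fin.revPerm.trans τ

private lemma cmpAt_compP {n : ℕ} (τ : Perm' n) (x y : ℕ) (hx : x < n) (hy : y < n) :
    cmpAt (compP τ) x y ↔ cmpAt τ y x := by
  rw [← cmpAt_iff (compP τ) hx hy, ← cmpAt_iff τ hy hx]
  simp [compP, Equiv.trans_apply, Fin.revPerm_apply, Fin.rev_lt_rev]

private lemma rev_mk {n v : ℕ} (hv : v < n) :
    Fin.rev ⟨v, hv⟩ = (⟨n - 1 - v, by omega⟩ : Fin n) := by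
  apply Fin.ext
  simp only [Fin.val_rev]
  omega

private lemma cmpAt_revP {n : ℕ} (τ : Perm' n) (x y : ℕ) (hx : x < n) (hy : y < n) :
    cmpAt (revP τ) x y ↔ cmpAt τ (n - 1 - x) (n - 1 - y) := by
  rw [← cmpAt_iff (revP τ) hx hy,
    ← cmpAt_iff τ (show n - 1 - x < n by omega) (show n - 1 - y < n by omega)]
  simp only [revP, Equiv.trans_apply, Fin.revPerm_apply, rev_mk hx, rev_mk hy]

private lemma hasBifix_compP {n : ℕ} (τ : Perm' n) (k : ℕ) :
    HasBifixLen (compP τ) k ↔ HasBifixLen τ k := by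
  rw [hasBifix_iff, hasBifix_iff]
  refine and_congr_right fun hk => and_congr_right fun hkn => ?_
  constructor <;> intro h a b ha hb
  · have h2 := h b a hb ha
    rw [cmpAt_compP τ (0 + b) (0 + a) (by omega) (by omega),
        cmpAt_compP τ (n - k + b) (n - k + a) (by omega) (by omega)] at h2
    exact h2
  · rw [cmpAt_compP τ (0 + a) (0 + b) (by omega) (by omega),
        cmpAt_compP τ (n - k + a) (n - k + b) (by omega) (by omega)]
    exact h b a hb ha

private lemma hasBifix_revP {n : ℕ} (τ : Perm' n) (k : ℕ) :
    HasBifixLen (revP τ) k ↔ HasBifixLen τ k := by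
  rw [hasBifix_iff, hasBifix_iff]
  refine and_congr_right fun hk => and_congr_right fun hkn => ?_
  constructor <;> intro h a b ha hb
  · have h2 := h (k - 1 - a) (k - 1 - b) (by omega) (by omega)
    rw [cmpAt_revP τ (0 + (k - 1 - a)) (0 + (k - 1 - b)) (by omega) (by omega),
        cmpAt_revP τ (n - k + (k - 1 - a)) (n - k + (k - 1 - b)) (by omega) (by omega)] at h2
    rw [show n - 1 - (0 + (k - 1 - a)) = n - k + a by omega,
        show n - 1 - (0 + (k - 1 - b)) = n - k + b by omega,
        show n - 1 - (n - k + (k - 1 - a)) = 0 + a by omega,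
        show n - 1 - (n - k + (k - 1 - b)) = 0 + b by omega] at h2
    exact h2.symm
  · rw [cmpAt_revP τ (0 + a) (0 + b) (by omega) (by omega),
        cmpAt_revP τ (n - k + a) (n - k + b) (by omega) (by omega)]
    rw [show n - 1 - (0 + a) = n - k + (k - 1 - a) by omega,
        show n - 1 - (0 + b) = n - k + (k - 1 - b) by omega,
        show n - 1 - (n - k + a) = 0 + (k - 1 - a) by omega,
        show n - 1 - (n - k + b) = 0 + (k - 1 - b) by omega]
    exact (h (k - 1 - a) (k - 1 - b) (by omega) (by omega)).symm

private lemma extLen_compP {n : ℕ} (τ : Perm' n) : extLen (compP τ) = extLen τ := by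
  have h : HasBifixLen (compP τ) = HasBifixLen τ :=
    funext fun k => propext (hasBifix_compP τ k)
  unfold extLen
  rw [h]

private lemma extLen_revP {n : ℕ} (τ : Perm' n) : extLen (revP τ) = extLen τ := by
  have h : HasBifixLen (revP τ) = HasBifixLen τ :=
    funext fun k => propext (hasBifix_revP τ k)
  unfold extLen
  rw [h]

private lemma not_iff_ends {n : ℕ} (hn : 3 ≤ n) (τ : Perm' n) (h1 : extLen τ = 1) :
    ¬ (cmpAt τ 0 1 ↔ cmpAt τ (n - 2) (n - 1)) := by
  intro hiff
  have hb : HasBifixLen τ 2 := by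
    rw [hasBifix_iff]
    refine ⟨by norm_num, by omega, ?_⟩
    intro a b ha hb
    interval_cases a <;> interval_cases b
    · constructor <;> intro h <;> exact absurd h (cmpAt_irrefl τ _)
    · rw [show (0 : ℕ) + 0 = 0 from rfl, show (0 : ℕ) + 1 = 1 from rfl,
        show n - 2 + 0 = n - 2 from rfl, show n - 2 + 1 = n - 1 by omega]
      exact hiff
    · rw [show (0 : ℕ) + 0 = 0 from rfl, show (0 : ℕ) + 1 = 1 from rfl,
        show n - 2 + 0 = n - 2 from rfl, show n - 2 + 1 = n - 1 by omega]
      rw [cmpAt_not τ 1 0 (by omega) (by omega) (by omega),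
        cmpAt_not τ (n - 1) (n - 2) (by omega) (by omega) (by omega)]
      exact not_congr hiff
    · constructor <;> intro h <;> exact absurd h (cmpAt_irrefl τ _)
  have h2 : 2 ≤ Nat.findGreatest (HasBifixLen τ) n := Nat.le_findGreatest (by omega) hb
  have h3 : 2 ≤ extLen τ := h2
  omega

private lemma compP_inv {n : ℕ} (τ : Perm' n) : compP (compP τ) = τ :=
  Equiv.ext fun x => by simp [compP, Equiv.trans_apply, Fin.revPerm_apply, Fin.rev_rev]

private lemma revP_inv {n : ℕ} (τ : Perm' n) : revP (revP τ) = τ :=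
  Equiv.ext fun x => by simp [revP, Equiv.trans_apply, Fin.revPerm_apply, Fin.rev_rev]

/-- Lemma 6.1: for `n ≥ 3`, the number of non-overlapping permutations
of length `n` (those with `|x(τ)| = 1`) is divisible by 4. -/
theorem stmt11 {n : ℕ} (hn : 3 ≤ n) :
    4 ∣ (Finset.univ.filter fun τ : Perm' n => extLen τ = 1).card := by
  classical
  set S : Finset (Perm' n) := Finset.univ.filter fun τ : Perm' n => extLen τ = 1 with hS
  have hmemS : ∀ τ : Perm' n, τ ∈ S ↔ extLen τ = 1 := by
    intro τ; simp [hS]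
  set P : Perm' n → Prop := fun τ => cmpAt τ 0 1 with hP
  set Q : Perm' n → Prop := fun τ => cmpAt τ 0 (n - 1) with hQ
  have hPcomp : ∀ τ : Perm' n, P (compP τ) ↔ ¬ P τ := fun τ =>
    (cmpAt_compP τ 0 1 (by omega) (by omega)).trans
      (cmpAt_not τ 1 0 (by omega) (by omega) (by omega))
  have hPrev : ∀ τ : Perm' n, extLen τ = 1 → P τ → P (revP τ) := by
    intro τ h1 hp
    have h2 : cmpAt (revP τ) 0 1 ↔ cmpAt τ (n - 1 - 0) (n - 1 - 1) :=
      cmpAt_revP τ 0 1 (by omega) (by omega)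
    rw [show n - 1 - 0 = n - 1 by omega, show n - 1 - 1 = n - 2 by omega] at h2
    have h3 : ¬ cmpAt τ (n - 2) (n - 1) := fun hc =>
      not_iff_ends hn τ h1 ⟨fun _ => hc, fun _ => hp⟩
    have h4 : cmpAt τ (n - 1) (n - 2) := by
      rw [cmpAt_not τ (n - 1) (n - 2) (by omega) (by omega) (by omega)]
      exact h3
    exact h2.mpr h4
  have hQrev : ∀ τ : Perm' n, Q (revP τ) ↔ ¬ Q τ := by
    intro τ
    have h2 := cmpAt_revP τ 0 (n - 1) (by omega) (by omega)
    rw [show n - 1 - 0 = n - 1 by omega, show n - 1 - (n - 1) = 0 by omega] at h2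
    exact h2.trans (cmpAt_not τ (n - 1) 0 (by omega) (by omega) (by omega))
  have hc1 : (S.filter P).card = (S.filter fun τ => ¬ P τ).card := by
    apply Finset.card_bij (fun τ _ => compP τ)
    · intro τ hτ
      rw [Finset.mem_filter] at hτ ⊢
      refine ⟨?_, ?_⟩
      · rw [hmemS] at *
        rw [extLen_compP]
        exact hτ.1
      · rw [hPcomp]
        exact not_not_intro hτ.2
    · intro a ha b hb h
      have h2 := congrArg compP h
      rwa [compP_inv, compP_inv] at h2
    · intro τ' hτ'
      refine ⟨compP τ', ?_, compP_inv τ'⟩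
      rw [Finset.mem_filter] at hτ' ⊢
      refine ⟨?_, ?_⟩
      · rw [hmemS] at *
        rw [extLen_compP]
        exact hτ'.1
      · rw [hPcomp]
        exact hτ'.2
  have hc2 : ((S.filter P).filter Q).card = ((S.filter P).filter fun τ => ¬ Q τ).card := by
    apply Finset.card_bij (fun τ _ => revP τ)
    · intro τ hτ
      rw [Finset.mem_filter, Finset.mem_filter] at hτ ⊢
      have hS1 : extLen τ = 1 := (hmemS τ).1 hτ.1.1
      refine ⟨⟨?_, ?_⟩, ?_⟩
      · rw [hmemS, extLen_revP]
        exact hS1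
      · exact hPrev τ hS1 hτ.1.2
      · rw [hQrev]
        exact not_not_intro hτ.2
    · intro a ha b hb h
      have h2 := congrArg revP h
      rwa [revP_inv, revP_inv] at h2
    · intro τ' hτ'
      refine ⟨revP τ', ?_, revP_inv τ'⟩
      rw [Finset.mem_filter, Finset.mem_filter] at hτ' ⊢
      have hS1 : extLen τ' = 1 := (hmemS τ').1 hτ'.1.1
      refine ⟨⟨?_, ?_⟩, ?_⟩
      · rw [hmemS, extLen_revP]
        exact hS1
      · exact hPrev τ' hS1 hτ'.1.2
      · rw [hQrev]
        exact hτ'.2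
  have e1 : (S.filter P).card + (S.filter fun τ => ¬ P τ).card = S.card :=
    Finset.card_filter_add_card_filter_not P
  have e2 : ((S.filter P).filter Q).card + ((S.filter P).filter fun τ => ¬ Q τ).card
      = (S.filter P).card :=
    Finset.card_filter_add_card_filter_not Q
  exact ⟨((S.filter P).filter Q).card, by omega⟩

end
end

section
/- There exists a function g : ℕ → ℝ with lim_{n→∞} n·g(n) = 0 such that for all n ≥ 2 and all m with 1 ≤ m ≤ n−1, the proportion of permutations of length n whose exterior has length at least m satisfies #{τ ∈ S_n : |x(τ)| ≥ m} / n! ≤ Σ_{i=m}^{⌊n/2⌋} 1/i! + g(n), where the sum is taken to be 0 when m > ⌊n/2⌋. -/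
open scoped Classical

noncomputable section

namespace Stmt13Aux

open Finset

set_option maxHeartbeats 1000000

variable {α β : Type*} [LinearOrder α] [LinearOrder β] {m : ℕ}

lemma strictMono_comp_sort {f : Fin m → α} (hf : Function.Injective f) :
    StrictMono (f ∘ Tuple.sort f) :=
  (Tuple.monotone_sort f).strictMono_of_injective (hf.comp (Tuple.sort f).injective)

lemma sort_eq_sort_of_pattern {f : Fin m → α} {g : Fin m → β}
    (hf : Function.Injective f) (hg : Function.Injective g)
    (h : ∀ a b, f a < f b ↔ g a < g b) : Tuple.sort f = Tuple.sort g := by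
  have hsg := strictMono_comp_sort hg
  have hmono : Monotone (f ∘ Tuple.sort g) := by
    intro x y hxy
    rcases eq_or_lt_of_le hxy with rfl | hlt
    · exact le_rfl
    · exact le_of_lt ((h _ _).mpr (hsg hlt))
  have := (Tuple.eq_sort_iff (f := f) (σ := Tuple.sort g)).mpr
    ⟨hmono, fun i j hij hfe => absurd ((Tuple.sort g).injective (hf hfe)) hij.ne⟩
  exact this.symm

lemma pattern_of_sort_eq {f : Fin m → α} {g : Fin m → β}
    (hf : Function.Injective f) (hg : Function.Injective g)
    (h : Tuple.sort f = Tuple.sort g) : ∀ a b, f a < f b ↔ g a < g b := by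
  intro a b
  have hsf := strictMono_comp_sort hf
  have hsg := strictMono_comp_sort hg
  have h1 : f a < f b ↔ (Tuple.sort f).symm a < (Tuple.sort f).symm b := by
    conv_lhs => rw [show f a = (f ∘ Tuple.sort f) ((Tuple.sort f).symm a) by simp,
                    show f b = (f ∘ Tuple.sort f) ((Tuple.sort f).symm b) by simp]
    exact hsf.lt_iff_lt
  have h2 : g a < g b ↔ (Tuple.sort g).symm a < (Tuple.sort g).symm b := by
    conv_lhs => rw [show g a = (g ∘ Tuple.sort g) ((Tuple.sort g).symm a) by simp,
                    show g b = (g ∘ Tuple.sort g) ((Tuple.sort g).symm b) by simp]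
    exact hsg.lt_iff_lt
  rw [h1, h2, h]

lemma eq_of_image_eq_of_pattern [DecidableEq α] {f g : Fin m → α}
    (hf : Function.Injective f) (hg : Function.Injective g)
    (himg : Finset.image f Finset.univ = Finset.image g Finset.univ)
    (h : ∀ a b, f a < f b ↔ g a < g b) : f = g := by
  have hs : Tuple.sort f = Tuple.sort g := sort_eq_sort_of_pattern hf hg h
  have hcard : (Finset.image f Finset.univ).card = m := by
    rw [Finset.card_image_of_injective _ hf, Finset.card_univ, Fintype.card_fin]
  have h1 : (f ∘ Tuple.sort f) = (Finset.image f Finset.univ).orderEmbOfFin hcard :=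
    Finset.orderEmbOfFin_unique hcard (fun x => Finset.mem_image_of_mem f (Finset.mem_univ _))
      (strictMono_comp_sort hf)
  have h2 : (g ∘ Tuple.sort f) = (Finset.image f Finset.univ).orderEmbOfFin hcard := by
    rw [hs]
    exact Finset.orderEmbOfFin_unique hcard
      (fun x => himg ▸ Finset.mem_image_of_mem g (Finset.mem_univ _))
      (strictMono_comp_sort hg)
  have hfg : f ∘ Tuple.sort f = g ∘ Tuple.sort f := h1.trans h2.symm
  funext x
  have := congrFun hfg ((Tuple.sort f).symm x)
  simpa using this

lemma tuple_injective {n m : ℕ} (τ : Perm' n) (i : ℕ) (h : i + m ≤ n) :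
    Function.Injective (fun a : Fin m => τ ⟨i + a, by have := a.isLt; omega⟩) := by
  intro a b hab
  have h2 := τ.injective hab
  rw [Fin.mk.injEq] at h2
  exact Fin.ext (by omega)

lemma window_eq_window_iff {n n' m : ℕ} (τ : Perm' n) (τ' : Perm' n') (i j : ℕ)
    (h1 : i + m ≤ n) (h2 : j + m ≤ n') :
    window τ i m = window τ' j m ↔
      ∀ a b : Fin m,
        (τ ⟨i + a, by have := a.isLt; omega⟩ < τ ⟨i + b, by have := b.isLt; omega⟩ ↔
         τ' ⟨j + a, by have := a.isLt; omega⟩ < τ' ⟨j + b, by have := b.isLt; omega⟩) := by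
  unfold window
  rw [dif_pos h1, dif_pos h2, inv_inj]
  constructor
  · intro h a b
    exact pattern_of_sort_eq (tuple_injective τ i h1) (tuple_injective τ' j h2) h a b
  · intro h
    exact sort_eq_sort_of_pattern (tuple_injective τ i h1) (tuple_injective τ' j h2) h

/-- the canonical embedding of `Fin k` onto the last `k` positions of `Fin n` -/
def lastEmb (n k : ℕ) (h : k ≤ n) : Fin k ↪ Fin n :=
  ⟨fun a => ⟨n - k + a, by have := a.isLt; omega⟩, by
    intro a b hab
    rw [Fin.mk.injEq] at hab
    exact Fin.ext (by omega)⟩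

/-- the tuple of the first `k` values of `τ` -/
def pT {n : ℕ} (τ : Perm' n) (k : ℕ) (hkn : k ≤ n) : Fin k → Fin n :=
  fun a => τ (Fin.castLE hkn a)

/-- the tuple of the last `k` values of `τ` -/
def sT {n : ℕ} (τ : Perm' n) (k : ℕ) (hkn : k ≤ n) : Fin k → Fin n :=
  fun a => τ (lastEmb n k hkn a)

lemma pT_inj {n : ℕ} (τ : Perm' n) (k : ℕ) (hkn : k ≤ n) :
    Function.Injective (pT τ k hkn) := fun a b hab =>
  Fin.castLE_injective hkn (τ.injective hab)

lemma sT_inj {n : ℕ} (τ : Perm' n) (k : ℕ) (hkn : k ≤ n) :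
    Function.Injective (sT τ k hkn) := fun a b hab =>
  (lastEmb n k hkn).injective (τ.injective hab)

lemma bifix_pattern {n k : ℕ} {τ : Perm' n} (h : HasBifixLen τ k) (hkn : k ≤ n) :
    ∀ a b : Fin k, (pT τ k hkn a < pT τ k hkn b ↔ sT τ k hkn a < sT τ k hkn b) := by
  have hkn' : k < n := h.2.1
  have hw := (window_eq_window_iff τ τ 0 (n - k) (by omega) (by omega)).mp h.2.2
  intro a b
  have hab := hw a b
  have e1 : τ ⟨0 + ↑a, by have := a.isLt; omega⟩ = pT τ k hkn a := by
    unfold pT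
    congr 1
    exact Fin.ext (by simp)
  have e2 : τ ⟨0 + ↑b, by have := b.isLt; omega⟩ = pT τ k hkn b := by
    unfold pT
    congr 1
    exact Fin.ext (by simp)
  have e3 : τ ⟨n - k + ↑a, by have := a.isLt; omega⟩ = sT τ k hkn a := rfl
  have e4 : τ ⟨n - k + ↑b, by have := b.isLt; omega⟩ = sT τ k hkn b := rfl
  rw [e1, e2, e3, e4] at hab
  exact hab

lemma mem_image_pT {n k : ℕ} {τ : Perm' n} (hkn : k ≤ n) {x : Fin n} :
    x ∈ Finset.image (pT τ k hkn) Finset.univ ↔ (τ.symm x).val < k := by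
  simp only [Finset.mem_image, Finset.mem_univ, true_and]
  constructor
  · rintro ⟨a, rfl⟩
    rw [pT, Equiv.symm_apply_apply]
    exact a.isLt
  · intro hx
    refine ⟨⟨(τ.symm x).val, hx⟩, ?_⟩
    rw [pT]
    have : Fin.castLE hkn ⟨(τ.symm x).val, hx⟩ = τ.symm x := Fin.ext rfl
    rw [this, Equiv.apply_symm_apply]

lemma mem_image_sT {n k : ℕ} {τ : Perm' n} (hkn : k ≤ n) {x : Fin n} :
    x ∈ Finset.image (sT τ k hkn) Finset.univ ↔ n - k ≤ (τ.symm x).val := by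
  simp only [Finset.mem_image, Finset.mem_univ, true_and]
  constructor
  · rintro ⟨a, rfl⟩
    rw [sT, Equiv.symm_apply_apply]
    show n - k ≤ n - k + ↑a
    omega
  · intro hx
    have hlt : (τ.symm x).val < n := (τ.symm x).isLt
    refine ⟨⟨(τ.symm x).val - (n - k), by omega⟩, ?_⟩
    rw [sT]
    have : lastEmb n k hkn ⟨(τ.symm x).val - (n - k), by omega⟩ = τ.symm x := by
      apply Fin.ext
      show n - k + ((τ.symm x).val - (n - k)) = (τ.symm x).val
      omega
    rw [this, Equiv.apply_symm_apply]

lemma rank_filter_image {n k : ℕ} {g : Fin k → Fin n} (hg : Function.Injective g) (a : Fin k) :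
    ((Finset.image g Finset.univ).filter (fun x => x < g a)).card =
      (Finset.univ.filter (fun b => g b < g a)).card := by
  rw [Finset.filter_image, Finset.card_image_of_injective _ hg]

lemma rank_inj {n : ℕ} {B : Finset (Fin n)} {y₁ y₂ : Fin n} (h₁ : y₁ ∈ B) (h₂ : y₂ ∈ B)
    (h : (B.filter (fun x => x < y₁)).card = (B.filter (fun x => x < y₂)).card) : y₁ = y₂ := by
  by_contra hne
  have key : ∀ z₁ z₂ : Fin n, z₁ ∈ B → z₁ < z₂ →
      (B.filter (fun x => x < z₁)).card < (B.filter (fun x => x < z₂)).card := by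
    intro z₁ z₂ hz₂ hz
    apply Finset.card_lt_card
    constructor
    · intro x hx
      rw [Finset.mem_filter] at hx ⊢
      exact ⟨hx.1, lt_trans hx.2 hz⟩
    · intro hsub
      have : z₁ ∈ B.filter (fun x => x < z₁) := hsub (by rw [Finset.mem_filter]; exact ⟨hz₂, hz⟩)
      rw [Finset.mem_filter] at this
      exact lt_irrefl _ this.2
  rcases lt_or_gt_of_ne hne with hlt | hlt
  · exact absurd h (Nat.ne_of_lt (key y₁ y₂ h₁ hlt))
  · exact absurd h.symm (Nat.ne_of_lt (key y₂ y₁ h₂ hlt))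

lemma count_small (n k : ℕ) (hk1 : 1 ≤ k) (hk : 2 * k ≤ n) :
    (Finset.univ.filter fun τ : Perm' n => HasBifixLen τ k).card * Nat.factorial k ≤
      Nat.factorial n := by
  classical
  have hkn : k ≤ n := by omega
  have hnotmem : ∀ x : Fin n, x.val < n - k → x ∉ Set.range (lastEmb n k hkn) := by
    intro x hx hmem
    obtain ⟨a, ha⟩ := hmem
    have hv : (lastEmb n k hkn a).val = n - k + a := rfl
    rw [ha] at hv
    omega
  have hinj : Set.InjOn (fun q : Perm' n × Perm' k => q.1 * (q.2.viaEmbedding (lastEmb n k hkn)))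
      ((Finset.univ.filter fun τ : Perm' n => HasBifixLen τ k) ×ˢ
        (Finset.univ : Finset (Perm' k))) := by
    rintro ⟨τ₁, ρ₁⟩ hmem₁ ⟨τ₂, ρ₂⟩ hmem₂ heq
    simp only [Finset.coe_product, Set.mem_prod, Finset.mem_coe, Finset.mem_filter] at hmem₁ hmem₂
    have hb₁ : HasBifixLen τ₁ k := hmem₁.1.2
    have hb₂ : HasBifixLen τ₂ k := hmem₂.1.2
    have happ : ∀ x : Fin n, τ₁ ((ρ₁.viaEmbedding (lastEmb n k hkn)) x) =
        τ₂ ((ρ₂.viaEmbedding (lastEmb n k hkn)) x) := by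
      intro x
      exact congrFun (congrArg (fun (e : Perm' n) => (e : Fin n → Fin n)) heq) x
    have hlow : ∀ x : Fin n, x.val < n - k → τ₁ x = τ₂ x := by
      intro x hx
      have h1 := happ x
      rwa [Equiv.Perm.viaEmbedding_apply_of_notMem _ _ x (hnotmem x hx),
           Equiv.Perm.viaEmbedding_apply_of_notMem _ _ x (hnotmem x hx)] at h1
    have hpre : pT τ₁ k hkn = pT τ₂ k hkn := by
      funext a
      exact hlow (Fin.castLE hkn a) (by have := a.isLt; show (a : ℕ) < n - k; omega)
    have hpat : ∀ a b : Fin k, sT τ₁ k hkn a < sT τ₁ k hkn b ↔ sT τ₂ k hkn a < sT τ₂ k hkn b := by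
      intro a b
      rw [← bifix_pattern hb₁ hkn, ← bifix_pattern hb₂ hkn, hpre]
    have himg : Finset.image (sT τ₁ k hkn) Finset.univ
        = Finset.image (sT τ₂ k hkn) Finset.univ := by
      have h3 : ∀ a : Fin k, sT τ₁ k hkn (ρ₁ a) = sT τ₂ k hkn (ρ₂ a) := by
        intro a
        have h4 := happ (lastEmb n k hkn a)
        rwa [Equiv.Perm.viaEmbedding_apply, Equiv.Perm.viaEmbedding_apply] at h4
      have hcomp : (sT τ₁ k hkn) ∘ ρ₁ = (sT τ₂ k hkn) ∘ ρ₂ := funext h3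
      calc Finset.image (sT τ₁ k hkn) Finset.univ
          = Finset.image (sT τ₁ k hkn) (Finset.image ρ₁ Finset.univ) := by
            rw [Finset.image_univ_equiv]
        _ = Finset.image ((sT τ₁ k hkn) ∘ ρ₁) Finset.univ := Finset.image_image
        _ = Finset.image ((sT τ₂ k hkn) ∘ ρ₂) Finset.univ := by rw [hcomp]
        _ = Finset.image (sT τ₂ k hkn) (Finset.image ρ₂ Finset.univ) := Finset.image_image.symm
        _ = Finset.image (sT τ₂ k hkn) Finset.univ := by rw [Finset.image_univ_equiv]
    have hf12 : sT τ₁ k hkn = sT τ₂ k hkn :=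
      eq_of_image_eq_of_pattern (sT_inj τ₁ k hkn) (sT_inj τ₂ k hkn) himg hpat
    have hτ : τ₁ = τ₂ := by
      apply Equiv.ext; intro x
      by_cases hx : x.val < n - k
      · exact hlow x hx
      · have hx' : x = lastEmb n k hkn ⟨x.val - (n - k), by have := x.isLt; omega⟩ := by
          apply Fin.ext
          show x.val = n - k + (x.val - (n - k))
          omega
        rw [hx']
        exact congrFun hf12 _
    have hρ : ρ₁ = ρ₂ := by
      apply Equiv.ext; intro a
      have h4 := happ (lastEmb n k hkn a)
      rw [Equiv.Perm.viaEmbedding_apply, Equiv.Perm.viaEmbedding_apply, ← hτ] at h4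
      exact (lastEmb n k hkn).injective (τ₁.injective h4)
    simp only [Prod.mk.injEq]
    exact ⟨hτ, hρ⟩
  have hcard := Finset.card_le_card_of_injOn
      (s := (Finset.univ.filter fun τ : Perm' n => HasBifixLen τ k) ×ˢ
        (Finset.univ : Finset (Perm' k)))
      (t := Finset.univ) _ (fun q _ => Finset.mem_univ _)
      (by rw [Finset.coe_product]; exact hinj)
  rwa [Finset.card_product, Finset.card_univ, Finset.card_univ, Fintype.card_perm,
      Fintype.card_perm, Fintype.card_fin, Fintype.card_fin] at hcard

lemma count_big (n k : ℕ) (hk1 : 1 ≤ k) (hkn : k < n) :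
    (Finset.univ.filter fun τ : Perm' n => HasBifixLen τ k).card ≤
      Nat.descFactorial n (n - k) * 2 ^ n := by
  classical
  have hkk : k ≤ n := le_of_lt hkn
  have hpn : n - k ≤ n := Nat.sub_le n k
  have hp1 : 1 ≤ n - k := by omega
  -- the injection
  have hinj : Set.InjOn
      (fun τ : Perm' n => ((⟨pT τ (n - k) hpn, pT_inj τ (n - k) hpn⟩ : Fin (n - k) ↪ Fin n),
        Finset.image (sT τ (n - k) hpn) Finset.univ))
      (Finset.univ.filter fun τ : Perm' n => HasBifixLen τ k) := by
    intro τ₁ hmem₁ τ₂ hmem₂ heq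
    rw [Finset.mem_coe, Finset.mem_filter] at hmem₁ hmem₂
    have hb₁ : HasBifixLen τ₁ k := hmem₁.2
    have hb₂ : HasBifixLen τ₂ k := hmem₂.2
    rw [Prod.mk.injEq] at heq
    have hfst : pT τ₁ (n - k) hpn = pT τ₂ (n - k) hpn :=
      congrArg (fun (e : Fin (n - k) ↪ Fin n) => (e : Fin (n - k) → Fin n)) heq.1
    have hsnd : Finset.image (sT τ₁ (n - k) hpn) Finset.univ
        = Finset.image (sT τ₂ (n - k) hpn) Finset.univ := heq.2
    -- the two larger windows
    have hA : Finset.image (pT τ₁ k hkk) Finset.univ = Finset.image (pT τ₂ k hkk) Finset.univ := by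
      have e1 : ∀ (τ : Perm' n), Finset.image (pT τ k hkk) Finset.univ =
          Finset.univ \ Finset.image (sT τ (n - k) hpn) Finset.univ := by
        intro τ
        ext x
        rw [mem_image_pT, Finset.mem_sdiff, mem_image_sT]
        have := (τ.symm x).isLt
        constructor
        · intro hx; exact ⟨Finset.mem_univ x, by omega⟩
        · intro hx; have := hx.2; omega
      rw [e1, e1, hsnd]
    have hB : Finset.image (sT τ₁ k hkk) Finset.univ = Finset.image (sT τ₂ k hkk) Finset.univ := by
      have e1 : ∀ (τ : Perm' n), Finset.image (sT τ k hkk) Finset.univ =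
          Finset.univ \ Finset.image (pT τ (n - k) hpn) Finset.univ := by
        intro τ
        ext x
        rw [mem_image_sT, Finset.mem_sdiff, mem_image_pT]
        have := (τ.symm x).isLt
        constructor
        · intro hx; exact ⟨Finset.mem_univ x, by omega⟩
        · intro hx; have := hx.2; omega
      rw [e1, e1]
      congr 1
      rw [hfst]
    -- rank identity for each permutation in the event
    have key : ∀ (τ : Perm' n), HasBifixLen τ k → ∀ a : Fin k,
        ((Finset.image (sT τ k hkk) Finset.univ).filter (fun x => x < sT τ k hkk a)).card =
        ((Finset.image (pT τ k hkk) Finset.univ).filter (fun x => x < pT τ k hkk a)).card := by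
      intro τ hb a
      rw [rank_filter_image (sT_inj τ k hkk), rank_filter_image (pT_inj τ k hkk)]
      congr 1
      apply Finset.filter_congr
      intro b _
      exact (bifix_pattern hb hkk b a).symm
    -- positionwise equality by strong induction
    have hval : ∀ j : ℕ, ∀ hj : j < n, τ₁ ⟨j, hj⟩ = τ₂ ⟨j, hj⟩ := by
      intro j
      induction j using Nat.strong_induction_on with
      | _ j IH =>
        intro hj
        rcases Nat.lt_or_ge j (n - k) with hjp | hjp
        · have h5 := congrFun hfst ⟨j, hjp⟩
          exact h5
        · set a : Fin k := ⟨j - (n - k), by omega⟩ with ha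
          have hja : (⟨j, hj⟩ : Fin n) = lastEmb n k hkk a := by
            apply Fin.ext
            show j = n - k + (j - (n - k))
            omega
          have hpa : pT τ₁ k hkk a = pT τ₂ k hkk a := by
            have h6 := IH (j - (n - k)) (by omega) (by omega)
            exact h6
          have hr1 := key τ₁ hb₁ a
          have hr2 := key τ₂ hb₂ a
          rw [hA, hpa, ← hr2, hB] at hr1
          have hy₁ : sT τ₁ k hkk a ∈ Finset.image (sT τ₂ k hkk) Finset.univ := by
            rw [← hB]
            exact Finset.mem_image_of_mem _ (Finset.mem_univ a)
          have hy₂ : sT τ₂ k hkk a ∈ Finset.image (sT τ₂ k hkk) Finset.univ :=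
            Finset.mem_image_of_mem _ (Finset.mem_univ a)
          have := rank_inj hy₁ hy₂ hr1
          rw [hja]
          exact this
    apply Equiv.ext
    intro x
    exact hval x.val x.isLt
  have hcard := Finset.card_le_card_of_injOn _ (fun q _ => Finset.mem_univ _) hinj
  rwa [Finset.card_univ, Fintype.card_prod, Fintype.card_embedding_eq, Fintype.card_finset,
      Fintype.card_fin, Fintype.card_fin] at hcard

lemma sq_le_four_mul_two_pow (m : ℕ) : m ^ 2 ≤ 4 * 2 ^ m := by
  induction m with
  | zero => simp
  | succ m IH =>
    have h2 : m < 2 ^ m := Nat.lt_two_pow_self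
    have h3 : (m + 1) ^ 2 = m ^ 2 + (2 * m + 1) := by ring
    have h4 : 4 * 2 ^ (m + 1) = 4 * 2 ^ m + 4 * 2 ^ m := by rw [pow_succ]; ring
    omega

end Stmt13Aux

/-- Lemma 6.4: there is `g : ℕ → ℝ` with `n * g n → 0` such that for
all `2 ≤ n` and `1 ≤ m ≤ n - 1`, the proportion of `τ ∈ S_n` with `|x(τ)| ≥ m` is at most
`∑_{i=m}^{⌊n/2⌋} 1/i! + g n` (the sum being empty when `m > ⌊n/2⌋`). -/
theorem stmt13 :
    ∃ g : ℕ → ℝ,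
      Filter.Tendsto (fun n : ℕ => (n : ℝ) * g n) Filter.atTop (nhds 0) ∧
      ∀ n : ℕ, 2 ≤ n → ∀ m : ℕ, 1 ≤ m → m ≤ n - 1 →
        ((Finset.univ.filter fun τ : Perm' n => m ≤ extLen τ).card : ℝ) /
            (Nat.factorial n : ℝ) ≤
          (∑ i ∈ Finset.Icc m (n / 2), (1 : ℝ) / (Nat.factorial i : ℝ)) + g n := by
  classical
  refine ⟨fun n : ℕ => (n : ℝ) * 2 ^ n / (Nat.factorial (n / 2 + 1) : ℝ), ?_, ?_⟩
  · -- the error term tends to zero fast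
    have hdiv : Filter.Tendsto (fun n : ℕ => n / 2 + 1) Filter.atTop Filter.atTop := by
      apply Filter.tendsto_atTop_atTop.mpr
      intro b
      exact ⟨2 * b, fun n hn => by omega⟩
    have h8 : Filter.Tendsto (fun m : ℕ => (8 : ℝ) ^ m / (Nat.factorial m : ℝ))
        Filter.atTop (nhds 0) := FloorSemiring.tendsto_pow_div_factorial_atTop 8
    have hcomp := (h8.comp hdiv).const_mul (16 : ℝ)
    rw [mul_zero] at hcomp
    refine squeeze_zero (fun n => by positivity) ?_ hcomp
    intro n
    set M := n / 2 + 1 with hM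
    have hmn : n ≤ 2 * M := by omega
    have hnat : n ^ 2 * 2 ^ n ≤ 16 * 8 ^ M := by
      have e1 : n ^ 2 ≤ (2 * M) ^ 2 := Nat.pow_le_pow_left hmn 2
      have e2 : (2 : ℕ) ^ n ≤ 2 ^ (2 * M) := Nat.pow_le_pow_right (by norm_num) hmn
      have e5 := Stmt13Aux.sq_le_four_mul_two_pow M
      calc n ^ 2 * 2 ^ n ≤ (2 * M) ^ 2 * 2 ^ (2 * M) := Nat.mul_le_mul e1 e2
        _ = 4 * M ^ 2 * 4 ^ M := by rw [pow_mul]; ring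
        _ ≤ 4 * (4 * 2 ^ M) * 4 ^ M := by
            have := Nat.mul_le_mul_right (4 ^ M) (Nat.mul_le_mul_left 4 e5)
            exact this
        _ = 16 * (2 ^ M * 4 ^ M) := by ring
        _ = 16 * 8 ^ M := by rw [← mul_pow]; norm_num
    have hfpos : (0 : ℝ) < (Nat.factorial M : ℝ) := by positivity
    have hcast : ((n : ℝ)) ^ 2 * 2 ^ n ≤ 16 * 8 ^ M := by exact_mod_cast hnat
    calc (n : ℝ) * ((n : ℝ) * 2 ^ n / (Nat.factorial M : ℝ))
        = ((n : ℝ) ^ 2 * 2 ^ n) / (Nat.factorial M : ℝ) := by ring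
      _ ≤ (16 * 8 ^ M) / (Nat.factorial M : ℝ) := by gcongr
      _ = 16 * ((8 : ℝ) ^ M / (Nat.factorial M : ℝ)) := by ring
  · intro n hn m hm1 hmn
    have hfact_pos : (0 : ℝ) < (Nat.factorial n : ℝ) := by positivity
    set c : ℕ → ℕ := fun k => (Finset.univ.filter fun τ : Perm' n => HasBifixLen τ k).card with hc
    have hsub : (Finset.univ.filter fun τ : Perm' n => m ≤ extLen τ) ⊆
        (Finset.Icc m (n - 1)).biUnion
          (fun k => Finset.univ.filter fun τ : Perm' n => HasBifixLen τ k) := by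
      intro τ hτ
      rw [Finset.mem_filter] at hτ
      have hmle : m ≤ extLen τ := hτ.2
      have h0 : extLen τ ≠ 0 := by omega
      have hPk : HasBifixLen τ (extLen τ) := by
        have h := (Nat.findGreatest_eq_iff (m := extLen τ)).mp rfl
        exact h.2.1 h0
      have hlt : extLen τ < n := hPk.2.1
      rw [Finset.mem_biUnion]
      exact ⟨extLen τ, Finset.mem_Icc.mpr ⟨hmle, by omega⟩,
        Finset.mem_filter.mpr ⟨Finset.mem_univ _, hPk⟩⟩
    have hdisj : Disjoint (Finset.Icc m (n / 2)) (Finset.Icc (n / 2 + 1) (n - 1)) := by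
      rw [Finset.disjoint_left]
      intro k h1 h2
      rw [Finset.mem_Icc] at h1 h2
      omega
    have hNle : (Finset.univ.filter fun τ : Perm' n => m ≤ extLen τ).card ≤
        ∑ k ∈ Finset.Icc m (n / 2), c k + ∑ k ∈ Finset.Icc (n / 2 + 1) (n - 1), c k := by
      calc (Finset.univ.filter fun τ : Perm' n => m ≤ extLen τ).card
          ≤ ((Finset.Icc m (n - 1)).biUnion
              (fun k => Finset.univ.filter fun τ : Perm' n => HasBifixLen τ k)).card :=
            Finset.card_le_card hsub
        _ ≤ ∑ k ∈ Finset.Icc m (n - 1), c k := Finset.card_biUnion_le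
        _ ≤ ∑ k ∈ Finset.Icc m (n / 2) ∪ Finset.Icc (n / 2 + 1) (n - 1), c k := by
            apply Finset.sum_le_sum_of_subset
            intro k hk
            rw [Finset.mem_Icc] at hk
            rw [Finset.mem_union, Finset.mem_Icc, Finset.mem_Icc]
            omega
        _ = _ := Finset.sum_union hdisj
    rw [div_le_iff₀ hfact_pos]
    have hterm1 : ∀ k ∈ Finset.Icc m (n / 2),
        (c k : ℝ) ≤ (Nat.factorial n : ℝ) / (Nat.factorial k : ℝ) := by
      intro k hk
      rw [Finset.mem_Icc] at hk
      have h1 := Stmt13Aux.count_small n k (by omega) (by omega)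
      rw [le_div_iff₀ (by positivity : (0 : ℝ) < (Nat.factorial k : ℝ))]
      exact_mod_cast h1
    have hterm2 : ∀ k ∈ Finset.Icc (n / 2 + 1) (n - 1), (c k : ℝ) ≤
        2 ^ n * ((Nat.factorial n : ℝ) / (Nat.factorial (n / 2 + 1) : ℝ)) := by
      intro k hk
      rw [Finset.mem_Icc] at hk
      have h1 := Stmt13Aux.count_big n k (by omega) (by omega)
      have hpos : (0 : ℝ) < (Nat.factorial k : ℝ) := by positivity
      have hdf : (Nat.factorial k : ℝ) * (Nat.descFactorial n (n - k) : ℝ)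
          = (Nat.factorial n : ℝ) := by
        have h2 := Nat.factorial_mul_descFactorial (show n - k ≤ n by omega)
        have h3 : n - (n - k) = k := by omega
        rw [h3] at h2
        exact_mod_cast h2
      have hdf' : (Nat.descFactorial n (n - k) : ℝ)
          = (Nat.factorial n : ℝ) / (Nat.factorial k : ℝ) := by
        rw [eq_div_iff hpos.ne']
        rw [← hdf]
        ring
      calc (c k : ℝ) ≤ (Nat.descFactorial n (n - k) : ℝ) * 2 ^ n := by exact_mod_cast h1
        _ = 2 ^ n * ((Nat.factorial n : ℝ) / (Nat.factorial k : ℝ)) := by rw [hdf']; ring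
        _ ≤ 2 ^ n * ((Nat.factorial n : ℝ) / (Nat.factorial (n / 2 + 1) : ℝ)) := by
            apply mul_le_mul_of_nonneg_left _ (by positivity)
            apply div_le_div_of_nonneg_left (by positivity) (by positivity)
            exact_mod_cast Nat.factorial_le (show n / 2 + 1 ≤ k by omega)
    have hcardIcc : ((Finset.Icc (n / 2 + 1) (n - 1)).card : ℝ) ≤ (n : ℝ) := by
      rw [Nat.card_Icc]
      exact_mod_cast (by omega : n - 1 + 1 - (n / 2 + 1) ≤ n)
    calc ((Finset.univ.filter fun τ : Perm' n => m ≤ extLen τ).card : ℝ)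
        ≤ ∑ k ∈ Finset.Icc m (n / 2), (c k : ℝ)
            + ∑ k ∈ Finset.Icc (n / 2 + 1) (n - 1), (c k : ℝ) := by
          push_cast [← Nat.cast_sum]
          exact_mod_cast hNle
      _ ≤ ∑ k ∈ Finset.Icc m (n / 2), (Nat.factorial n : ℝ) / (Nat.factorial k : ℝ)
            + ((Finset.Icc (n / 2 + 1) (n - 1)).card : ℝ)
              * (2 ^ n * ((Nat.factorial n : ℝ) / (Nat.factorial (n / 2 + 1) : ℝ))) := by
          apply add_le_add (Finset.sum_le_sum hterm1)
          have h4 := Finset.sum_le_card_nsmul _ _ _ hterm2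
          simpa using h4
      _ ≤ ∑ k ∈ Finset.Icc m (n / 2), (Nat.factorial n : ℝ) / (Nat.factorial k : ℝ)
            + (n : ℝ) * (2 ^ n * ((Nat.factorial n : ℝ) / (Nat.factorial (n / 2 + 1) : ℝ))) := by
          apply add_le_add_right ?_ _
          apply mul_le_mul_of_nonneg_right hcardIcc (by positivity)
      _ = ((∑ i ∈ Finset.Icc m (n / 2), (1 : ℝ) / (Nat.factorial i : ℝ))
            + (n : ℝ) * 2 ^ n / (Nat.factorial (n / 2 + 1) : ℝ)) * (Nat.factorial n : ℝ) := by
          rw [add_mul, Finset.sum_mul]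
          congr 1
          · apply Finset.sum_congr rfl
            intro k _
            ring
          · field_simp

end
end

section
/- The proportion of permutations of length n whose exterior is not contained in their interior tends to 0: lim_{n→∞} #{τ ∈ S_n : x(τ) ≰ i(τ)} / n! = 0, where ≤ denotes consecutive pattern containment. -/
open scoped Classical

noncomputable section

namespace Stmt15Aux

open Finset

/-! ### Basic window machinery -/

/-- Entry of `τ` at natural index `x` (junk value `n` out of range). -/
def ap {n : ℕ} (τ : Perm' n) (x : ℕ) : ℕ := if h : x < n then (τ ⟨x, h⟩ : ℕ) else n

lemma ap_eq {n : ℕ} (τ : Perm' n) {x : ℕ} (h : x < n) : ap τ x = (τ ⟨x, h⟩ : ℕ) := dif_pos h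

lemma sortinv_lt_iff {m : ℕ} {α : Type*} [LinearOrder α] (f : Fin m → α)
    (hf : Function.Injective f) (a b : Fin m) :
    (Tuple.sort f)⁻¹ a < (Tuple.sort f)⁻¹ b ↔ f a < f b := by
  have hmono : StrictMono (f ∘ Tuple.sort f) :=
    (Tuple.monotone_sort f).strictMono_of_injective (hf.comp (Tuple.sort f).injective)
  rw [← hmono.lt_iff_lt]
  simp [Function.comp_apply, Equiv.Perm.inv_def, Equiv.apply_symm_apply]

lemma perm_eq_of_lt_iff {m : ℕ} {σ σ' : Perm' m}
    (h : ∀ a b : Fin m, σ a < σ b ↔ σ' a < σ' b) : σ = σ' := by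
  have hs : StrictMono (⇑σ' ∘ ⇑σ.symm) := by
    intro x y hxy
    have hxy' : σ (σ.symm x) < σ (σ.symm y) := by simpa using hxy
    exact (h _ _).mp hxy'
  have hr : Set.range (⇑σ' ∘ ⇑σ.symm) = Set.range (id : Fin m → Fin m) := by
    rw [Set.range_comp]
    rw [Set.range_eq_univ.2 σ.symm.surjective, Set.image_univ,
      Set.range_eq_univ.2 σ'.surjective, Set.range_id]
  have hid : StrictMono (id : Fin m → Fin m) := strictMono_id
  haveI : WellFoundedLT (Fin m) := Finite.to_wellFoundedLT
  have heq : ⇑σ' ∘ ⇑σ.symm = id := (hs.range_inj hid).1 hr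
  apply Equiv.ext
  intro x
  have hx := congrFun heq (σ x)
  simpa using hx.symm

lemma window_apply_lt {n : ℕ} (τ : Perm' n) {i m : ℕ} (h : i + m ≤ n) (a b : Fin m) :
    window τ i m a < window τ i m b ↔ ap τ (i + a) < ap τ (i + b) := by
  have hf : Function.Injective fun a : Fin m =>
      τ ⟨i + ↑a, by have := a.isLt; omega⟩ := by
    intro x y hxy
    have h2 := τ.injective hxy
    have h3 : i + (x : ℕ) = i + (y : ℕ) := congrArg Fin.val h2
    exact Fin.ext (by omega)
  have ha : i + (a : ℕ) < n := by have := a.isLt; omega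
  have hb : i + (b : ℕ) < n := by have := b.isLt; omega
  simp only [window]
  rw [dif_pos h, sortinv_lt_iff _ hf, ap_eq τ ha, ap_eq τ hb]
  exact Iff.rfl

lemma window_eq_iff {n : ℕ} (τ : Perm' n) {i m : ℕ} (h : i + m ≤ n) (σ : Perm' m) :
    window τ i m = σ ↔ ∀ a b : Fin m, σ a < σ b ↔ ap τ (i + a) < ap τ (i + b) := by
  constructor
  · rintro rfl a b
    exact window_apply_lt τ h a b
  · intro hh
    exact perm_eq_of_lt_iff fun a b => (window_apply_lt τ h a b).trans (hh a b).symm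

lemma window_congr {n : ℕ} {τ₁ τ₂ : Perm' n} {i m : ℕ} (h : i + m ≤ n)
    (he : ∀ a : Fin m, ap τ₁ (i + a) = ap τ₂ (i + a)) : window τ₁ i m = window τ₂ i m :=
  perm_eq_of_lt_iff fun a b => by
    rw [window_apply_lt τ₁ h a b, window_apply_lt τ₂ h a b, he a, he b]

/-! ### Twisting a permutation inside a window -/

/-- The positions of the window `[q, q+l)` inside `Fin n`. -/
def winEquiv {n : ℕ} (q l : ℕ) (h : q + l ≤ n) :
    Fin l ≃ {x : Fin n // q ≤ x.val ∧ x.val < q + l} where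
  toFun a := ⟨⟨q + a, by have := a.isLt; omega⟩,
    ⟨Nat.le_add_right q a, by have := a.isLt; exact Nat.add_lt_add_left this q⟩⟩
  invFun x := ⟨x.1.1 - q, by have := x.2; omega⟩
  left_inv a := by
    apply Fin.ext
    simp
  right_inv x := by
    apply Subtype.ext
    apply Fin.ext
    have := x.2
    simp
    omega

/-- Rearranging the entries of `τ` within the window `[q, q+l)` by `g`. -/
def twist {n : ℕ} (q l : ℕ) (h : q + l ≤ n) (g : Perm' l) : Perm' n :=
  g.extendDomain (winEquiv q l h)

lemma twist_mul {n : ℕ} (q l : ℕ) (h : q + l ≤ n) (g g' : Perm' l) :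
    twist q l h g * twist q l h g' = twist q l h (g * g') :=
  Equiv.Perm.extendDomain_mul (winEquiv q l h) g g'

lemma twist_one {n : ℕ} (q l : ℕ) (h : q + l ≤ n) : twist q l h 1 = 1 :=
  Equiv.Perm.extendDomain_one _

lemma ap_mul_twist_in {n : ℕ} {q l : ℕ} (h : q + l ≤ n) (g : Perm' l) (τ : Perm' n)
    (a : Fin l) : ap (τ * twist q l h g) (q + a) = ap τ (q + g a) := by
  have h1 : q + (a : ℕ) < n := by have := a.isLt; omega
  have h2 : q + (g a : ℕ) < n := by have := (g a).isLt; omega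
  rw [ap_eq _ h1, ap_eq _ h2]
  congr 1
  rw [Equiv.Perm.mul_apply]
  congr 1
  show g.extendDomain (winEquiv q l h) (⟨q + (a : ℕ), h1⟩ : Fin n) = (⟨q + ((g a) : ℕ), h2⟩ : Fin n)
  have e1 : (⟨q + (a : ℕ), h1⟩ : Fin n) = ((winEquiv q l h) a : Fin n) := rfl
  have e3 : (⟨q + ((g a) : ℕ), h2⟩ : Fin n) = ((winEquiv q l h) (g a) : Fin n) := rfl
  rw [e1, e3]
  exact Equiv.Perm.extendDomain_apply_image (e := g) (f := winEquiv q l h) a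

lemma ap_mul_twist_out {n : ℕ} {q l : ℕ} (h : q + l ≤ n) (g : Perm' l) (τ : Perm' n)
    {x : ℕ} (hx : x < q ∨ q + l ≤ x) : ap (τ * twist q l h g) x = ap τ x := by
  by_cases hxn : x < n
  · rw [ap_eq _ hxn, ap_eq _ hxn]
    congr 1
    rw [Equiv.Perm.mul_apply]
    congr 1
    apply Equiv.Perm.extendDomain_apply_not_subtype
    rintro ⟨h1, h2⟩
    simp only [Fin.val_mk] at h1 h2 -- may need fixing
    omega
  · rw [ap, dif_neg hxn, ap, dif_neg hxn]

lemma window_mul_twist_self {n : ℕ} {q l : ℕ} (h : q + l ≤ n) (g : Perm' l) (τ : Perm' n) :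
    window (τ * twist q l h g) q l = window τ q l * g := by
  refine perm_eq_of_lt_iff fun a b => ?_
  rw [window_apply_lt _ h a b, Equiv.Perm.mul_apply, Equiv.Perm.mul_apply,
    window_apply_lt τ h (g a) (g b), ap_mul_twist_in h g τ a, ap_mul_twist_in h g τ b]

lemma window_mul_twist_other {n : ℕ} {q l q' l' : ℕ} (h : q + l ≤ n) (g : Perm' l)
    (τ : Perm' n) (h' : q' + l' ≤ n) (hd : q' + l' ≤ q ∨ q + l ≤ q') :
    window (τ * twist q l h g) q' l' = window τ q' l' :=
  window_congr h' fun a => ap_mul_twist_out h g τ (by have := a.isLt; omega)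

/-! ### The counting lemma for disjoint windows -/

lemma mcl {n l : ℕ} :
    ∀ (r : ℕ) (p : Fin r → ℕ), (∀ s, p s + l ≤ n) →
      (∀ s s' : Fin r, s ≠ s' → p s + l ≤ p s' ∨ p s' + l ≤ p s) →
      ∀ σ : Fin r → Perm' l,
        (Finset.univ.filter fun τ : Perm' n => ∀ s, window τ (p s) l = σ s).card
          * (Nat.factorial l) ^ r = Nat.factorial n := by
  intro r
  induction r with
  | zero =>
    intro p hp hd σ
    have he : (Finset.univ.filter fun τ : Perm' n => ∀ s : Fin 0, window τ (p s) l = σ s)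
        = Finset.univ := by
      apply Finset.filter_true_of_mem
      intro τ _ s
      exact s.elim0
    rw [he]
    simp [Finset.card_univ, Fintype.card_perm, Fintype.card_fin]
  | succ r ih =>
    intro p hp hd σ
    have hq0 : p 0 + l ≤ n := hp 0
    set C' : Perm' n → Prop := fun τ => ∀ s : Fin r, window τ (p s.succ) l = σ s.succ
      with hC'
    have claim1 : ∀ g g' : Perm' l,
        (Finset.univ.filter fun τ : Perm' n => C' τ ∧ window τ (p 0) l = g).card
          = (Finset.univ.filter fun τ : Perm' n => C' τ ∧ window τ (p 0) l = g').card := by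
      intro g g'
      have key : ∀ (g g' : Perm' l) (τ : Perm' n),
          τ ∈ (Finset.univ.filter fun τ : Perm' n => C' τ ∧ window τ (p 0) l = g) →
          τ * twist (p 0) l hq0 (g⁻¹ * g') ∈
            (Finset.univ.filter fun τ : Perm' n => C' τ ∧ window τ (p 0) l = g') := by
        intro g g' τ hτ
        rw [Finset.mem_filter] at hτ ⊢
        obtain ⟨-, hc, hw⟩ := hτ
        refine ⟨Finset.mem_univ _, ?_, ?_⟩
        · intro s
          rw [window_mul_twist_other hq0 _ τ (hp s.succ)
            (Or.symm (hd 0 s.succ (Fin.succ_ne_zero s).symm))]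
          exact hc s
        · rw [window_mul_twist_self hq0 _ τ, hw, mul_inv_cancel_left]
      have hinv : ∀ (g g' : Perm' l) (τ : Perm' n),
          τ * twist (p 0) l hq0 (g⁻¹ * g') * twist (p 0) l hq0 (g'⁻¹ * g) = τ := by
        intro g g' τ
        rw [mul_assoc, twist_mul]
        have : g⁻¹ * g' * (g'⁻¹ * g) = 1 := by group
        rw [this, twist_one, mul_one]
      exact Finset.card_bij' (fun τ _ => τ * twist (p 0) l hq0 (g⁻¹ * g'))
        (fun τ _ => τ * twist (p 0) l hq0 (g'⁻¹ * g))
        (key g g') (key g' g) (fun τ _ => hinv g g' τ) (fun τ _ => hinv g' g τ)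
    have claim2 : (Finset.univ.filter fun τ : Perm' n => C' τ).card
        = Nat.factorial l *
          (Finset.univ.filter fun τ : Perm' n => C' τ ∧ window τ (p 0) l = σ 0).card := by
      rw [Finset.card_eq_sum_card_fiberwise
        (f := fun τ : Perm' n => window τ (p 0) l) (t := Finset.univ)
        (fun τ _ => Finset.mem_univ _)]
      have hterm : ∀ g : Perm' l,
          ((Finset.univ.filter fun τ : Perm' n => C' τ).filter
            fun τ => window τ (p 0) l = g).card
          = (Finset.univ.filter fun τ : Perm' n => C' τ ∧ window τ (p 0) l = σ 0).card := by
        intro g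
        rw [Finset.filter_filter]
        exact claim1 g (σ 0)
      rw [Finset.sum_congr rfl fun g _ => hterm g, Finset.sum_const, Finset.card_univ,
        Fintype.card_perm, Fintype.card_fin, smul_eq_mul]
    have hsplit : (Finset.univ.filter fun τ : Perm' n => ∀ s, window τ (p s) l = σ s)
        = Finset.univ.filter fun τ : Perm' n => C' τ ∧ window τ (p 0) l = σ 0 := by
      apply Finset.filter_congr
      intro τ _
      constructor
      · intro hall
        exact ⟨fun s => hall s.succ, hall 0⟩
      · rintro ⟨hc, h0⟩ s
        rcases Fin.eq_zero_or_eq_succ s with rfl | ⟨s', rfl⟩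
        · exact h0
        · exact hc s'
    have hIH := ih (fun s => p s.succ) (fun s => hp s.succ)
      (fun s s' hss => hd s.succ s'.succ (fun hc => hss (Fin.succ_injective _ hc)))
      (fun s => σ s.succ)
    rw [hsplit]
    calc (Finset.univ.filter fun τ : Perm' n =>
          C' τ ∧ window τ (p 0) l = σ 0).card * Nat.factorial l ^ (r + 1)
        = (Nat.factorial l *
            (Finset.univ.filter fun τ : Perm' n =>
              C' τ ∧ window τ (p 0) l = σ 0).card) * Nat.factorial l ^ r := by ring
      _ = (Finset.univ.filter fun τ : Perm' n => C' τ).card * Nat.factorial l ^ r := by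
          rw [← claim2]
      _ = Nat.factorial n := hIH

lemma fib {n l : ℕ} (r : ℕ) (p : Fin r → ℕ) (hp : ∀ s, p s + l ≤ n)
    (hd : ∀ s s' : Fin r, s ≠ s' → p s + l ≤ p s' ∨ p s' + l ≤ p s)
    (P : (Fin r → Perm' l) → Prop) :
    (Finset.univ.filter fun τ : Perm' n => P fun s => window τ (p s) l).card
        * (Nat.factorial l) ^ r
      = Nat.factorial n * (Finset.univ.filter P).card := by
  rw [Finset.card_eq_sum_card_fiberwise
    (f := fun (τ : Perm' n) (s : Fin r) => window τ (p s) l)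
    (t := Finset.univ.filter P)
    (fun τ hτ => Finset.mem_filter.2 ⟨Finset.mem_univ _, (Finset.mem_filter.1 hτ).2⟩)]
  rw [Finset.sum_mul]
  have hterm : ∀ v ∈ Finset.univ.filter P,
      ((Finset.univ.filter fun τ : Perm' n => P fun s => window τ (p s) l).filter
        fun τ => (fun s : Fin r => window τ (p s) l) = v).card * Nat.factorial l ^ r
      = Nat.factorial n := by
    intro v hv
    have hPv : P v := (Finset.mem_filter.1 hv).2
    have hset : ((Finset.univ.filter fun τ : Perm' n => P fun s => window τ (p s) l).filter
        fun τ => (fun s : Fin r => window τ (p s) l) = v)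
        = Finset.univ.filter fun τ : Perm' n => ∀ s, window τ (p s) l = v s := by
      ext τ
      simp only [Finset.mem_filter, Finset.mem_univ, true_and]
      constructor
      · rintro ⟨-, hfn⟩
        intro s
        exact congrFun hfn s
      · intro hall
        have hfn : (fun s : Fin r => window τ (p s) l) = v := funext hall
        exact ⟨by rw [hfn]; exact hPv, hfn⟩
    rw [hset]
    exact mcl r p hp hd v
  rw [Finset.sum_congr rfl hterm, Finset.sum_const, smul_eq_mul, mul_comm]

/-- Instance-robust version of `fib`, quantified over the ambient finsets. -/
lemma fib' {n l : ℕ} (r : ℕ) (p : Fin r → ℕ) (hp : ∀ s, p s + l ≤ n)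
    (hd : ∀ s s' : Fin r, s ≠ s' → p s + l ≤ p s' ∨ p s' + l ≤ p s)
    (P : (Fin r → Perm' l) → Prop)
    (A : Finset (Perm' n)) (B : Finset (Fin r → Perm' l))
    (hA : ∀ τ, τ ∈ A ↔ P fun s => window τ (p s) l) (hB : ∀ v, v ∈ B ↔ P v) :
    A.card * (Nat.factorial l) ^ r = Nat.factorial n * B.card := by
  have e1 : A = Finset.univ.filter fun τ : Perm' n => P fun s => window τ (p s) l :=
    Finset.ext fun τ => by simp [hA, Finset.mem_filter]
  have e2 : B = Finset.univ.filter P :=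
    Finset.ext fun v => by simp [hB, Finset.mem_filter]
  rw [e1, e2]
  exact fib r p hp hd P

/-! ### Counting bounds for specific events -/

lemma card_two_window_le {n L q : ℕ} (hq : L ≤ q) (hqn : q + L ≤ n)
    (A : Finset (Perm' n)) (hA : ∀ τ, τ ∈ A ↔ window τ 0 L = window τ q L) :
    A.card * Nat.factorial L ≤ Nat.factorial n := by
  have hp : ∀ s : Fin 2, (![0, q] s) + L ≤ n := by
    intro s
    fin_cases s <;> simp <;> omega
  have hd : ∀ s s' : Fin 2, s ≠ s' →
      ![0, q] s + L ≤ ![0, q] s' ∨ ![0, q] s' + L ≤ ![0, q] s := by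
    intro s s' hss
    fin_cases s <;> fin_cases s' <;> simp_all <;> omega
  have h := fib' (n := n) 2 ![0, q] hp hd (fun v => v 0 = v 1) A
    (Finset.univ.filter fun v : Fin 2 → Perm' L => v 0 = v 1)
    (fun τ => by rw [hA]; simp) (fun v => by simp)
  have hcardP : (Finset.univ.filter fun v : Fin 2 → Perm' L => v 0 = v 1).card
      ≤ Nat.factorial L := by
    have hinj : Set.InjOn (fun v : Fin 2 → Perm' L => v 0)
        (Finset.univ.filter fun v : Fin 2 → Perm' L => v 0 = v 1) := by
      intro v hv w hw hvw
      simp only [Finset.coe_filter, Set.mem_setOf_eq] at hv hw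
      have h1 : v 1 = w 1 := by rw [← hv.2, ← hw.2]; exact hvw
      funext s
      fin_cases s
      · exact hvw
      · exact h1
    have := Finset.card_le_card_of_injOn (fun v : Fin 2 → Perm' L => v 0)
      (fun v _ => Finset.mem_univ (v 0)) hinj
    simpa [Finset.card_univ, Fintype.card_perm, Fintype.card_fin] using this
  have heq : A.card * Nat.factorial L ^ 2 ≤ Nat.factorial n * Nat.factorial L := by
    rw [h]
    exact Nat.mul_le_mul_left _ hcardP
  have hpos : 0 < Nat.factorial L := Nat.factorial_pos L
  have h2 : A.card * Nat.factorial L * Nat.factorial L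
      ≤ Nat.factorial n * Nat.factorial L := by
    calc A.card * Nat.factorial L * Nat.factorial L
        = A.card * Nat.factorial L ^ 2 := by ring
      _ ≤ _ := heq
  exact Nat.le_of_mul_le_mul_right h2 hpos

lemma card_avoid_tuples_le {β : Type*} [Fintype β] [DecidableEq β] (t : ℕ) :
    (Finset.univ.filter fun v : Fin (t + 1) → β => ∀ s, s ≠ 0 → v s ≠ v 0).card
      ≤ Fintype.card β * (Fintype.card β - 1) ^ t := by
  classical
  have hsub : (Finset.univ.filter fun v : Fin (t + 1) → β => ∀ s, s ≠ 0 → v s ≠ v 0)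
      ⊆ Finset.univ.biUnion fun b : β =>
          Fintype.piFinset fun s : Fin (t + 1) =>
            if s = 0 then ({b} : Finset β) else Finset.univ.erase b := by
    intro v hv
    rw [Finset.mem_filter] at hv
    refine Finset.mem_biUnion.2 ⟨v 0, Finset.mem_univ _, Fintype.mem_piFinset.2 fun s => ?_⟩
    by_cases hs : s = 0
    · subst hs; simp
    · rw [if_neg hs]
      exact Finset.mem_erase.2 ⟨hv.2 s hs, Finset.mem_univ _⟩
  refine (Finset.card_le_card hsub).trans (Finset.card_biUnion_le.trans ?_)
  have hterm : ∀ b : β,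
      (Fintype.piFinset fun s : Fin (t + 1) =>
        if s = 0 then ({b} : Finset β) else Finset.univ.erase b).card
      = (Fintype.card β - 1) ^ t := by
    intro b
    rw [Fintype.card_piFinset]
    rw [Fin.prod_univ_succ]
    have h0 : (if (0 : Fin (t + 1)) = 0 then ({b} : Finset β) else Finset.univ.erase b).card
        = 1 := by simp
    have hsucc : ∀ i : Fin t,
        (if (i.succ : Fin (t + 1)) = 0 then ({b} : Finset β) else Finset.univ.erase b).card
        = Fintype.card β - 1 := by
      intro i
      rw [if_neg (Fin.succ_ne_zero i)]
      rw [Finset.card_erase_of_mem (Finset.mem_univ b), Finset.card_univ]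
    rw [h0, one_mul, Finset.prod_congr rfl fun i _ => hsucc i, Finset.prod_const,
      Finset.card_univ, Fintype.card_fin]
  rw [Finset.sum_congr rfl fun b _ => hterm b, Finset.sum_const, smul_eq_mul,
    Finset.card_univ]

lemma card_avoid_le {n k t : ℕ} (htn : (t + 1) * k ≤ n)
    (A : Finset (Perm' n))
    (hA : ∀ τ, τ ∈ A ↔
      ∀ s : Fin (t + 1), s ≠ 0 → window τ ((s : ℕ) * k) k ≠ window τ 0 k) :
    A.card * (Nat.factorial k) ^ (t + 1)
      ≤ Nat.factorial n * (Nat.factorial k * (Nat.factorial k - 1) ^ t) := by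
  have hp : ∀ s : Fin (t + 1), (s : ℕ) * k + k ≤ n := by
    intro s
    have hs := s.isLt
    calc (s : ℕ) * k + k = ((s : ℕ) + 1) * k := by ring
      _ ≤ (t + 1) * k := Nat.mul_le_mul_right _ (by omega)
      _ ≤ n := htn
  have hd : ∀ s s' : Fin (t + 1), s ≠ s' →
      (s : ℕ) * k + k ≤ (s' : ℕ) * k ∨ (s' : ℕ) * k + k ≤ (s : ℕ) * k := by
    intro s s' hss
    have hne : (s : ℕ) ≠ (s' : ℕ) := fun hc => hss (Fin.ext hc)
    rcases Nat.lt_or_ge (s : ℕ) (s' : ℕ) with hlt | hge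
    · left
      calc (s : ℕ) * k + k = ((s : ℕ) + 1) * k := by ring
        _ ≤ (s' : ℕ) * k := Nat.mul_le_mul_right _ (by omega)
    · right
      calc (s' : ℕ) * k + k = ((s' : ℕ) + 1) * k := by ring
        _ ≤ (s : ℕ) * k := Nat.mul_le_mul_right _ (by omega)
  have h := fib' (n := n) (t + 1) (fun s : Fin (t + 1) => (s : ℕ) * k) hp hd
    (fun v => ∀ s, s ≠ 0 → v s ≠ v 0) A
    (Finset.univ.filter fun v : Fin (t + 1) → Perm' k => ∀ s, s ≠ 0 → v s ≠ v 0)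
    (fun τ => by rw [hA]; simp) (fun v => by simp)
  rw [h]
  apply Nat.mul_le_mul_left
  have := card_avoid_tuples_le (β := Perm' k) t
  simpa [Fintype.card_perm, Fintype.card_fin] using this

/-! ### Bifix events -/

lemma bifix_large {n j d s : ℕ} (τ : Perm' n) (hdj : d + j = n) (hd0 : 0 < d) (hs : 0 < s)
    (h2L : 2 * (s * d) ≤ n) (hw : window τ 0 j = window τ d j) :
    window τ 0 (s * d) = window τ (s * d) (s * d) := by
  obtain ⟨s', rfl⟩ : ∃ s'', s = s'' + 1 := ⟨s - 1, by omega⟩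
  set L := (s' + 1) * d with hL
  have hsd : s' * d + d = L := by rw [hL]; ring
  have hLn : L + L ≤ n := by omega
  have hshift : ∀ x y : ℕ, x < j → y < j → (ap τ x < ap τ y ↔ ap τ (d + x) < ap τ (d + y)) := by
    intro x y hx hy
    have h0j : 0 + j ≤ n := by omega
    have hdjn : d + j ≤ n := by omega
    have h1 := window_apply_lt τ h0j (⟨x, hx⟩ : Fin j) ⟨y, hy⟩
    have h2 := window_apply_lt τ hdjn (⟨x, hx⟩ : Fin j) ⟨y, hy⟩
    rw [hw] at h1
    rw [h2] at h1
    simpa using h1.symm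
  have hstep : ∀ r : ℕ, r ≤ s' + 1 → ∀ x y : ℕ, x < L → y < L →
      (ap τ x < ap τ y ↔ ap τ (r * d + x) < ap τ (r * d + y)) := by
    intro r
    induction r with
    | zero => intro _ x y _ _; simp
    | succ r ihr =>
      intro hrs x y hx hy
      have h1 := ihr (by omega) x y hx hy
      have hrd : r * d ≤ s' * d := Nat.mul_le_mul_right _ (by omega)
      have hxj : r * d + x < j := by omega
      have hyj : r * d + y < j := by omega
      have h2 := hshift (r * d + x) (r * d + y) hxj hyj
      have e1 : d + (r * d + x) = (r + 1) * d + x := by ring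
      have e2 : d + (r * d + y) = (r + 1) * d + y := by ring
      rw [e1, e2] at h2
      exact h1.trans h2
  refine perm_eq_of_lt_iff fun a b => ?_
  have h0L : 0 + L ≤ n := by omega
  have hLL : L + L ≤ n := hLn
  rw [window_apply_lt τ h0L a b, window_apply_lt τ hLL a b]
  simp only [Nat.zero_add]
  exact hstep (s' + 1) le_rfl a b a.isLt b.isLt

lemma card_hasBifix_le {n j : ℕ} (hj0 : 0 < j) (hjn : j < n)
    (A : Finset (Perm' n)) (hA : ∀ τ, τ ∈ A ↔ HasBifixLen τ j) :
    A.card * Nat.factorial (min j (n / 4)) ≤ Nat.factorial n := by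
  by_cases h2j : 2 * j ≤ n
  · set A2 : Finset (Perm' n) :=
      Finset.univ.filter fun τ : Perm' n => window τ 0 j = window τ (n - j) j with hA2
    have hsub : A ⊆ A2 := by
      intro τ hτ
      rw [hA2, Finset.mem_filter]
      exact ⟨Finset.mem_univ _, ((hA τ).1 hτ).2.2⟩
    have h := card_two_window_le (n := n) (L := j) (q := n - j) (by omega) (by omega)
      A2 (fun τ => by rw [hA2, Finset.mem_filter]; simp)
    have hmono : Nat.factorial (min j (n / 4)) ≤ Nat.factorial j :=
      Nat.factorial_le (min_le_left _ _)
    calc A.card * Nat.factorial (min j (n / 4))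
        ≤ A2.card * Nat.factorial j :=
          Nat.mul_le_mul (Finset.card_le_card hsub) hmono
      _ ≤ Nat.factorial n := h
  · set d := n - j with hdd
    have hd0 : 0 < d := by omega
    have h2d : 2 * d ≤ n := by omega
    set s := n / (2 * d) with hss
    set L := s * d with hLL
    have hs1 : 1 ≤ s := by
      rw [hss]
      exact (Nat.one_le_div_iff (by omega)).2 h2d
    have key : 2 * d * s + n % (2 * d) = n := Nat.div_add_mod n (2 * d)
    have hmod : n % (2 * d) < 2 * d := Nat.mod_lt _ (by omega)
    have e2 : 2 * d * s = 2 * L := by rw [hLL]; ring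
    rw [e2] at key
    have hLd : d ≤ L := by
      rw [hLL]
      calc d = 1 * d := (one_mul d).symm
        _ ≤ s * d := Nat.mul_le_mul_right _ hs1
    have h2Ln : 2 * L ≤ n := by omega
    have hL4 : min j (n / 4) ≤ L := le_trans (min_le_right _ _) (by omega)
    set A2 : Finset (Perm' n) :=
      Finset.univ.filter fun τ : Perm' n => window τ 0 L = window τ L L with hA2
    have hsub : A ⊆ A2 := by
      intro τ hτ
      rw [hA2, Finset.mem_filter]
      refine ⟨Finset.mem_univ _, ?_⟩
      have hbf := (hA τ).1 hτ
      have hw : window τ 0 j = window τ d j := by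
        have := hbf.2.2
        rwa [← hdd] at this
      have := bifix_large (s := s) τ (by omega) hd0 (by omega) (by omega) hw
      rwa [← hLL] at this
    have h := card_two_window_le (n := n) (L := L) (q := L) le_rfl (by omega)
      A2 (fun τ => by rw [hA2, Finset.mem_filter]; simp)
    have hmono : Nat.factorial (min j (n / 4)) ≤ Nat.factorial L := Nat.factorial_le hL4
    calc A.card * Nat.factorial (min j (n / 4))
        ≤ A2.card * Nat.factorial L :=
          Nat.mul_le_mul (Finset.card_le_card hsub) hmono
      _ ≤ Nat.factorial n := h

/-! ### The exterior and the decomposition -/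

lemma perm_one_eq (σ σ' : Perm' 1) : σ = σ' :=
  Equiv.ext fun x => Subsingleton.elim _ _

lemma hasBifixLen_one {n : ℕ} (τ : Perm' n) (hn : 2 ≤ n) : HasBifixLen τ 1 :=
  ⟨one_pos, by omega, perm_one_eq _ _⟩

lemma extLen_pos {n : ℕ} (τ : Perm' n) (hn : 2 ≤ n) : 1 ≤ extLen τ :=
  Nat.le_findGreatest (by omega) (hasBifixLen_one τ hn)

lemma extLen_bifix {n : ℕ} (τ : Perm' n) (hn : 2 ≤ n) : HasBifixLen τ (extLen τ) :=
  Nat.findGreatest_spec (m := 1) (by omega) (hasBifixLen_one τ hn)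

lemma decomp {n m : ℕ} (hm : 1 ≤ m) (hn : 2 * m + 4 ≤ n) (τ : Perm' n)
    (hτ : ¬ PattLE (extPerm τ) (intPerm τ)) :
    ∃ k, k ∈ Finset.Icc 1 (n - 1) ∧
      ((k ≤ m ∧ ∀ s : Fin ((n - 1) / k - 1 + 1), s ≠ 0 →
          window τ ((s : ℕ) * k) k ≠ window τ 0 k)
        ∨ (¬ k ≤ m ∧ HasBifixLen τ k)) := by
  set k := extLen τ with hk
  have hb : HasBifixLen τ k := extLen_bifix τ (by omega)
  have hk1 : 1 ≤ k := extLen_pos τ (by omega)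
  have hkn : k < n := hb.2.1
  refine ⟨k, Finset.mem_Icc.2 ⟨hk1, by omega⟩, ?_⟩
  by_cases hkm : k ≤ m
  · left
    refine ⟨hkm, fun s hs0 heq => ?_⟩
    apply hτ
    have hs1 : 1 ≤ (s : ℕ) := by
      have hne : (s : ℕ) ≠ 0 := fun h0 => hs0 (Fin.ext (by simp [h0]))
      omega
    have hsk : (s : ℕ) * k + k ≤ n - 1 := by
      have hsle : (s : ℕ) ≤ (n - 1) / k - 1 := Nat.lt_succ_iff.mp s.isLt
      have hq1 : 1 ≤ (n - 1) / k := (Nat.one_le_div_iff (by omega)).2 (by omega)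
      have h1 : ((s : ℕ) + 1) * k ≤ ((n - 1) / k) * k :=
        Nat.mul_le_mul_right _ (by omega)
      have h2 : ((n - 1) / k) * k ≤ n - 1 := Nat.div_mul_le_self _ _
      calc (s : ℕ) * k + k = ((s : ℕ) + 1) * k := by ring
        _ ≤ n - 1 := le_trans h1 h2
    have hS1 : 1 ≤ (s : ℕ) * k := Nat.mul_pos (by omega) (by omega)
    refine ⟨(s : ℕ) * k - 1, ⟨by omega, fun a b => ?_⟩⟩
    have E1 : extPerm τ a < extPerm τ b ↔
        ap τ ((s : ℕ) * k + a) < ap τ ((s : ℕ) * k + b) :=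
      (window_eq_iff τ (show (s : ℕ) * k + k ≤ n by omega) (window τ 0 k)).1 heq a b
    rw [E1]
    have h3 := window_apply_lt τ (show 1 + (n - 2) ≤ n by omega)
      (⟨(s : ℕ) * k - 1 + a, by have := a.isLt; omega⟩ : Fin (n - 2))
      (⟨(s : ℕ) * k - 1 + b, by have := b.isLt; omega⟩ : Fin (n - 2))
    rw [show 1 + ((s : ℕ) * k - 1 + (a : ℕ)) = (s : ℕ) * k + a by omega,
      show 1 + ((s : ℕ) * k - 1 + (b : ℕ)) = (s : ℕ) * k + b by omega] at h3
    exact h3.symm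
  · exact Or.inr ⟨hkm, hb⟩

/-! ### Auxiliary arithmetic -/

lemma two_pow_le_factorial (k : ℕ) : 2 ^ (k - 1) ≤ Nat.factorial k := by
  induction k with
  | zero => simp
  | succ k ih =>
    cases k with
    | zero => simp [Nat.factorial]
    | succ k' =>
      have h1 : 2 ^ (k' + 2 - 1) = 2 * 2 ^ (k' + 1 - 1) := by
        show 2 ^ (k' + 1) = 2 * 2 ^ k'
        rw [pow_succ]
        ring
      rw [h1, Nat.factorial_succ]
      exact Nat.mul_le_mul (by omega) ih

lemma factorial_quarter_ge_sq {n : ℕ} (hn : 256 ≤ n) : n ^ 2 ≤ Nat.factorial (n / 4) := by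
  obtain ⟨b, hb⟩ : ∃ b, n / 4 = b + 4 := ⟨n / 4 - 4, by omega⟩
  have hb60 : 60 ≤ b := by omega
  have hnb : n ≤ 4 * b + 19 := by omega
  have hA : 4 * b + 19 ≤ (b + 1) ^ 2 := by nlinarith
  have h2 : n ^ 2 ≤ ((b + 1) ^ 2) ^ 2 :=
    Nat.pow_le_pow_left (le_trans hnb hA) 2
  have e : Nat.factorial (b + 4)
      = (b + 4) * (b + 3) * (b + 2) * (b + 1) * Nat.factorial b := by
    simp [Nat.factorial_succ]
    ring
  have h1 : ((b + 1) ^ 2) ^ 2 ≤ Nat.factorial (b + 4) := by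
    rw [e]
    have hchain : ((b + 1) ^ 2) ^ 2 ≤ (b + 4) * (b + 3) * (b + 2) * (b + 1) := by nlinarith
    calc ((b + 1) ^ 2) ^ 2 ≤ (b + 4) * (b + 3) * (b + 2) * (b + 1) := hchain
      _ ≤ (b + 4) * (b + 3) * (b + 2) * (b + 1) * Nat.factorial b :=
        Nat.le_mul_of_pos_right _ (Nat.factorial_pos b)
  rw [hb]
  exact le_trans h2 h1

/-! ### The main per-`n` bound -/

lemma small_bound_real {n m k : ℕ} (hk1 : 1 ≤ k) (hkm : k ≤ m) (hmn : 2 * m + 4 ≤ n)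
    (A : Finset (Perm' n))
    (hA : ∀ τ, τ ∈ A ↔ ∀ s : Fin ((n - 1) / k - 1 + 1), s ≠ 0 →
        window τ ((s : ℕ) * k) k ≠ window τ 0 k) :
    (A.card : ℝ) ≤ (Nat.factorial n : ℝ) *
      (1 - 1 / (Nat.factorial m : ℝ)) ^ ((n - 1) / m - 1) := by
  set t : ℕ := (n - 1) / k - 1 with ht
  have hq1 : 1 ≤ (n - 1) / k := (Nat.one_le_div_iff (by omega)).2 (by omega)
  have htn : (t + 1) * k ≤ n := by
    have h1 : t + 1 = (n - 1) / k := by omega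
    rw [h1]
    calc (n - 1) / k * k ≤ n - 1 := Nat.div_mul_le_self _ _
      _ ≤ n := by omega
  have hc := card_avoid_le htn A hA
  have hkf1 : 1 ≤ Nat.factorial k := Nat.factorial_pos k
  have hkfR : (1 : ℝ) ≤ (Nat.factorial k : ℝ) := by exact_mod_cast hkf1
  have hkfpos : (0 : ℝ) < ((Nat.factorial k : ℝ)) ^ (t + 1) := by positivity
  have step1 : (A.card : ℝ) ≤ (Nat.factorial n : ℝ) *
      ((Nat.factorial k : ℝ) * ((Nat.factorial k : ℝ) - 1) ^ t)
      / ((Nat.factorial k : ℝ)) ^ (t + 1) := by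
    rw [le_div_iff₀ hkfpos]
    have hcast : ((A.card * Nat.factorial k ^ (t + 1) : ℕ) : ℝ)
        ≤ ((Nat.factorial n * (Nat.factorial k * (Nat.factorial k - 1) ^ t) : ℕ) : ℝ) := by
      exact_mod_cast hc
    calc (A.card : ℝ) * ((Nat.factorial k : ℝ)) ^ (t + 1)
        = ((A.card * Nat.factorial k ^ (t + 1) : ℕ) : ℝ) := by push_cast; ring
      _ ≤ ((Nat.factorial n * (Nat.factorial k * (Nat.factorial k - 1) ^ t) : ℕ) : ℝ) := hcast
      _ = (Nat.factorial n : ℝ) *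
          ((Nat.factorial k : ℝ) * ((Nat.factorial k : ℝ) - 1) ^ t) := by
          push_cast [Nat.cast_sub hkf1]
          ring
  have step2 : (Nat.factorial n : ℝ) *
      ((Nat.factorial k : ℝ) * ((Nat.factorial k : ℝ) - 1) ^ t)
      / ((Nat.factorial k : ℝ)) ^ (t + 1)
      = (Nat.factorial n : ℝ) * (1 - 1 / (Nat.factorial k : ℝ)) ^ t := by
    have hx : (Nat.factorial k : ℝ) ≠ 0 := by positivity
    have hxx : 1 - 1 / (Nat.factorial k : ℝ)
        = ((Nat.factorial k : ℝ) - 1) / (Nat.factorial k : ℝ) := by field_simp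
    rw [hxx, div_pow, pow_succ]
    field_simp
  have hbk0 : (0 : ℝ) ≤ 1 - 1 / (Nat.factorial k : ℝ) := by
    have : 1 / (Nat.factorial k : ℝ) ≤ 1 := by
      rw [div_le_one (by positivity)]
      exact hkfR
    linarith
  have hbk1 : 1 - 1 / (Nat.factorial k : ℝ) ≤ 1 := by
    have : (0 : ℝ) ≤ 1 / (Nat.factorial k : ℝ) := by positivity
    linarith
  have hTt : (n - 1) / m - 1 ≤ t := by
    have := Nat.div_le_div_left (c := k) hkm (by omega) (a := n - 1)
    omega
  have hkmf : (Nat.factorial k : ℝ) ≤ (Nat.factorial m : ℝ) := by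
    exact_mod_cast Nat.factorial_le hkm
  have hbkm : 1 - 1 / (Nat.factorial k : ℝ) ≤ 1 - 1 / (Nat.factorial m : ℝ) := by
    have : 1 / (Nat.factorial m : ℝ) ≤ 1 / (Nat.factorial k : ℝ) :=
      one_div_le_one_div_of_le (by positivity) hkmf
    linarith
  have p1 : (1 - 1 / (Nat.factorial k : ℝ)) ^ t
      ≤ (1 - 1 / (Nat.factorial k : ℝ)) ^ ((n - 1) / m - 1) :=
    pow_le_pow_of_le_one hbk0 hbk1 hTt
  have p2 : (1 - 1 / (Nat.factorial k : ℝ)) ^ ((n - 1) / m - 1)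
      ≤ (1 - 1 / (Nat.factorial m : ℝ)) ^ ((n - 1) / m - 1) :=
    pow_le_pow_left₀ hbk0 hbkm _
  calc (A.card : ℝ)
      ≤ (Nat.factorial n : ℝ) *
        ((Nat.factorial k : ℝ) * ((Nat.factorial k : ℝ) - 1) ^ t)
        / ((Nat.factorial k : ℝ)) ^ (t + 1) := step1
    _ = (Nat.factorial n : ℝ) * (1 - 1 / (Nat.factorial k : ℝ)) ^ t := step2
    _ ≤ (Nat.factorial n : ℝ) * (1 - 1 / (Nat.factorial m : ℝ)) ^ ((n - 1) / m - 1) := by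
        apply mul_le_mul_of_nonneg_left (le_trans p1 p2) (by positivity)

lemma large_bound_real {n k m : ℕ} (hk : m < k) (hkn : k < n) (hm : 1 ≤ m)
    (A : Finset (Perm' n)) (hA : ∀ τ, τ ∈ A ↔ HasBifixLen τ k) :
    (A.card : ℝ) ≤ (Nat.factorial n : ℝ) *
      ((1 / 2 : ℝ) ^ (k - 1) + 1 / (Nat.factorial (n / 4) : ℝ)) := by
  have hc := card_hasBifix_le (by omega) hkn A hA
  have hMpos : (0 : ℝ) < (Nat.factorial (min k (n / 4)) : ℝ) := by
    exact_mod_cast Nat.factorial_pos _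
  have step1 : (A.card : ℝ)
      ≤ (Nat.factorial n : ℝ) / (Nat.factorial (min k (n / 4)) : ℝ) := by
    rw [le_div_iff₀ hMpos]
    exact_mod_cast hc
  have hk4 : (0 : ℝ) < (Nat.factorial k : ℝ) := by exact_mod_cast Nat.factorial_pos k
  have hn4 : (0 : ℝ) < (Nat.factorial (n / 4) : ℝ) := by exact_mod_cast Nat.factorial_pos _
  have step2 : (Nat.factorial n : ℝ) / (Nat.factorial (min k (n / 4)) : ℝ)
      ≤ (Nat.factorial n : ℝ) * (1 / (Nat.factorial k : ℝ) + 1 / (Nat.factorial (n / 4) : ℝ)) := by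
    rcases min_choice k (n / 4) with hmin | hmin <;> rw [hmin] <;>
      rw [div_eq_mul_one_div] <;>
      apply mul_le_mul_of_nonneg_left _ (by positivity)
    · have : (0 : ℝ) ≤ 1 / (Nat.factorial (n / 4) : ℝ) := by positivity
      linarith
    · have : (0 : ℝ) ≤ 1 / (Nat.factorial k : ℝ) := by positivity
      linarith
  have step3 : 1 / (Nat.factorial k : ℝ) ≤ (1 / 2 : ℝ) ^ (k - 1) := by
    have h2p : (0 : ℝ) < (2 : ℝ) ^ (k - 1) := by positivity
    have hle : (2 : ℝ) ^ (k - 1) ≤ (Nat.factorial k : ℝ) := by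
      exact_mod_cast two_pow_le_factorial k
    rw [one_div_pow]
    exact one_div_le_one_div_of_le h2p hle
  calc (A.card : ℝ)
      ≤ (Nat.factorial n : ℝ) / (Nat.factorial (min k (n / 4)) : ℝ) := step1
    _ ≤ (Nat.factorial n : ℝ) * (1 / (Nat.factorial k : ℝ) + 1 / (Nat.factorial (n / 4) : ℝ)) := step2
    _ ≤ (Nat.factorial n : ℝ) * ((1 / 2 : ℝ) ^ (k - 1) + 1 / (Nat.factorial (n / 4) : ℝ)) := by
        apply mul_le_mul_of_nonneg_left _ (by positivity)
        linarith [step3]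

lemma main_bound {n m : ℕ} (hm : 1 ≤ m) (hn : 2 * m + 4 ≤ n)
    (A : Finset (Perm' n)) (hA : ∀ τ, τ ∈ A ↔ ¬ PattLE (extPerm τ) (intPerm τ)) :
    (A.card : ℝ) / (Nat.factorial n : ℝ)
      ≤ m * (1 - 1 / (Nat.factorial m : ℝ)) ^ ((n - 1) / m - 1)
        + 2 * (1 / 2 : ℝ) ^ m + n * (1 / (Nat.factorial (n / 4) : ℝ)) := by
  classical
  set F : ℕ → Finset (Perm' n) := fun k =>
    if k ≤ m then
      Finset.univ.filter fun τ : Perm' n =>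
        ∀ s : Fin ((n - 1) / k - 1 + 1), s ≠ 0 → window τ ((s : ℕ) * k) k ≠ window τ 0 k
    else Finset.univ.filter fun τ : Perm' n => HasBifixLen τ k
    with hF
  have hFmem_small : ∀ k, k ≤ m → ∀ τ : Perm' n, τ ∈ F k ↔
      ∀ s : Fin ((n - 1) / k - 1 + 1), s ≠ 0 → window τ ((s : ℕ) * k) k ≠ window τ 0 k := by
    intro k hk τ
    rw [hF]
    simp only [if_pos hk, Finset.mem_filter, Finset.mem_univ, true_and]
  have hFmem_large : ∀ k, ¬ k ≤ m → ∀ τ : Perm' n, τ ∈ F k ↔ HasBifixLen τ k := by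
    intro k hk τ
    rw [hF]
    simp only [if_neg hk, Finset.mem_filter, Finset.mem_univ, true_and]
  have hsubset : A ⊆ (Finset.Icc 1 (n - 1)).biUnion F := by
    intro τ hτ
    obtain ⟨k, hk, hcase⟩ := decomp hm hn τ ((hA τ).1 hτ)
    refine Finset.mem_biUnion.2 ⟨k, hk, ?_⟩
    rcases hcase with ⟨h1, h2⟩ | ⟨h1, h2⟩
    · exact (hFmem_small k h1 τ).2 h2
    · exact (hFmem_large k h1 τ).2 h2
  have hcardN : A.card ≤ ∑ k ∈ Finset.Icc 1 (n - 1), (F k).card :=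
    le_trans (Finset.card_le_card hsubset) Finset.card_biUnion_le
  have hIcc : Finset.Icc 1 (n - 1) = Finset.Ico 1 n := by
    rw [← Finset.Ico_add_one_right_eq_Icc]
    congr 1
    omega
  have hsplit : ∑ k ∈ Finset.Ico 1 (m + 1), ((F k).card : ℝ)
      + ∑ k ∈ Finset.Ico (m + 1) n, ((F k).card : ℝ)
      = ∑ k ∈ Finset.Ico 1 n, ((F k).card : ℝ) :=
    Finset.sum_Ico_consecutive _ (by omega) (by omega)
  have hsumR : (A.card : ℝ) ≤ ∑ k ∈ Finset.Ico 1 (m + 1), ((F k).card : ℝ)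
      + ∑ k ∈ Finset.Ico (m + 1) n, ((F k).card : ℝ) := by
    rw [hsplit]
    have : (A.card : ℝ) ≤ ((∑ k ∈ Finset.Icc 1 (n - 1), (F k).card : ℕ) : ℝ) := by
      exact_mod_cast hcardN
    rw [hIcc] at this
    rw [← Nat.cast_sum]
    exact this
  -- bound the small part
  have hsmall : ∀ k ∈ Finset.Ico 1 (m + 1), ((F k).card : ℝ)
      ≤ (Nat.factorial n : ℝ) * (1 - 1 / (Nat.factorial m : ℝ)) ^ ((n - 1) / m - 1) := by
    intro k hk
    rw [Finset.mem_Ico] at hk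
    exact small_bound_real hk.1 (by omega) hn (F k) (hFmem_small k (by omega))
  have hsum_small : ∑ k ∈ Finset.Ico 1 (m + 1), ((F k).card : ℝ)
      ≤ m * ((Nat.factorial n : ℝ) * (1 - 1 / (Nat.factorial m : ℝ)) ^ ((n - 1) / m - 1)) := by
    calc ∑ k ∈ Finset.Ico 1 (m + 1), ((F k).card : ℝ)
        ≤ (Finset.Ico 1 (m + 1)).card •
          ((Nat.factorial n : ℝ) * (1 - 1 / (Nat.factorial m : ℝ)) ^ ((n - 1) / m - 1)) :=
          Finset.sum_le_card_nsmul _ _ _ hsmall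
      _ = m * ((Nat.factorial n : ℝ) * (1 - 1 / (Nat.factorial m : ℝ)) ^ ((n - 1) / m - 1)) := by
          rw [Nat.card_Ico, nsmul_eq_mul]
          norm_num
  -- bound the large part
  have hlarge : ∀ k ∈ Finset.Ico (m + 1) n, ((F k).card : ℝ)
      ≤ (Nat.factorial n : ℝ) * ((1 / 2 : ℝ) ^ (k - 1) + 1 / (Nat.factorial (n / 4) : ℝ)) := by
    intro k hk
    rw [Finset.mem_Ico] at hk
    exact large_bound_real (by omega) hk.2 hm (F k) (hFmem_large k (by omega))
  have hsum_large : ∑ k ∈ Finset.Ico (m + 1) n, ((F k).card : ℝ)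
      ≤ (Nat.factorial n : ℝ) * (2 * (1 / 2 : ℝ) ^ m)
        + (Nat.factorial n : ℝ) * (n * (1 / (Nat.factorial (n / 4) : ℝ))) := by
    have hgeom : ∑ k ∈ Finset.Ico (m + 1) n, (1 / 2 : ℝ) ^ (k - 1) ≤ 2 * (1 / 2 : ℝ) ^ m := by
      have hterm : ∀ k ∈ Finset.Ico (m + 1) n, (1 / 2 : ℝ) ^ (k - 1) ≤ 2 * (1 / 2 : ℝ) ^ k := by
        intro k hk
        rw [Finset.mem_Ico] at hk
        have hk1 : 1 ≤ k := by omega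
        rw [show k = (k - 1) + 1 by omega, pow_succ]
        rw [show (k - 1) + 1 - 1 = k - 1 by omega]
        ring_nf
        nlinarith [pow_nonneg (by norm_num : (0:ℝ) ≤ 1/2) (k - 1)]
      calc ∑ k ∈ Finset.Ico (m + 1) n, (1 / 2 : ℝ) ^ (k - 1)
          ≤ ∑ k ∈ Finset.Ico (m + 1) n, 2 * (1 / 2 : ℝ) ^ k := Finset.sum_le_sum hterm
        _ = 2 * ∑ k ∈ Finset.Ico (m + 1) n, (1 / 2 : ℝ) ^ k := by rw [Finset.mul_sum]
        _ ≤ 2 * ((1 / 2 : ℝ) ^ (m + 1) / (1 - 1 / 2)) := by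
            apply mul_le_mul_of_nonneg_left _ (by norm_num)
            exact geom_sum_Ico_le_of_lt_one (by norm_num) (by norm_num)
        _ = 2 * (1 / 2 : ℝ) ^ m := by
            rw [pow_succ]
            ring
    have hcount : ((Finset.Ico (m + 1) n).card : ℝ) ≤ (n : ℝ) := by
      rw [Nat.card_Ico]
      exact_mod_cast Nat.sub_le n (m + 1)
    have hnn : (0 : ℝ) ≤ 1 / (Nat.factorial (n / 4) : ℝ) := by positivity
    calc ∑ k ∈ Finset.Ico (m + 1) n, ((F k).card : ℝ)
        ≤ ∑ k ∈ Finset.Ico (m + 1) n,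
            (Nat.factorial n : ℝ) * ((1 / 2 : ℝ) ^ (k - 1) + 1 / (Nat.factorial (n / 4) : ℝ)) :=
          Finset.sum_le_sum hlarge
      _ = (Nat.factorial n : ℝ) * (∑ k ∈ Finset.Ico (m + 1) n, (1 / 2 : ℝ) ^ (k - 1))
          + (Nat.factorial n : ℝ) *
            ((Finset.Ico (m + 1) n).card * (1 / (Nat.factorial (n / 4) : ℝ))) := by
          rw [← Finset.mul_sum, Finset.sum_add_distrib, Finset.sum_const, nsmul_eq_mul]
          ring
      _ ≤ (Nat.factorial n : ℝ) * (2 * (1 / 2 : ℝ) ^ m)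
          + (Nat.factorial n : ℝ) * (n * (1 / (Nat.factorial (n / 4) : ℝ))) := by
          have h1 : (Nat.factorial n : ℝ) * (∑ k ∈ Finset.Ico (m + 1) n, (1 / 2 : ℝ) ^ (k - 1))
              ≤ (Nat.factorial n : ℝ) * (2 * (1 / 2 : ℝ) ^ m) :=
            mul_le_mul_of_nonneg_left hgeom (by positivity)
          have h2 : (Nat.factorial n : ℝ) *
              ((Finset.Ico (m + 1) n).card * (1 / (Nat.factorial (n / 4) : ℝ)))
              ≤ (Nat.factorial n : ℝ) * (n * (1 / (Nat.factorial (n / 4) : ℝ))) := by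
            apply mul_le_mul_of_nonneg_left _ (by positivity)
            exact mul_le_mul_of_nonneg_right hcount hnn
          linarith
  -- combine
  have hfpos : (0 : ℝ) < (Nat.factorial n : ℝ) := by exact_mod_cast Nat.factorial_pos n
  rw [div_le_iff₀ hfpos]
  calc (A.card : ℝ)
      ≤ ∑ k ∈ Finset.Ico 1 (m + 1), ((F k).card : ℝ)
        + ∑ k ∈ Finset.Ico (m + 1) n, ((F k).card : ℝ) := hsumR
    _ ≤ m * ((Nat.factorial n : ℝ) * (1 - 1 / (Nat.factorial m : ℝ)) ^ ((n - 1) / m - 1))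
        + ((Nat.factorial n : ℝ) * (2 * (1 / 2 : ℝ) ^ m)
          + (Nat.factorial n : ℝ) * (n * (1 / (Nat.factorial (n / 4) : ℝ)))) := by
        linarith [hsum_small, hsum_large]
    _ = (m * (1 - 1 / (Nat.factorial m : ℝ)) ^ ((n - 1) / m - 1)
        + 2 * (1 / 2 : ℝ) ^ m + n * (1 / (Nat.factorial (n / 4) : ℝ))) * (Nat.factorial n : ℝ) := by
        ring

end Stmt15Aux

/-- Theorem 6.7: the proportion of permutations of length `n` whose
exterior is not contained (as a consecutive pattern) in their interior tends to 0. -/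
theorem stmt15 :
    Filter.Tendsto
      (fun n : ℕ =>
        ((Finset.univ.filter fun τ : Perm' n =>
            ¬ PattLE (extPerm τ) (intPerm τ)).card : ℝ) / (Nat.factorial n : ℝ))
      Filter.atTop (nhds 0) := by
  rw [NormedAddCommGroup.tendsto_nhds_zero]
  intro ε hε
  have hε3 : (0 : ℝ) < ε / 3 := by linarith
  -- choose m
  have h12 : Filter.Tendsto (fun m : ℕ => (2 : ℝ) * (1 / 2) ^ m) Filter.atTop (nhds 0) := by
    have h := tendsto_pow_atTop_nhds_zero_of_lt_one
      (by norm_num : (0 : ℝ) ≤ 1 / 2) (by norm_num : (1 / 2 : ℝ) < 1)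
    simpa using h.const_mul (2 : ℝ)
  obtain ⟨m, hm⟩ := ((h12.eventually_lt_const hε3).and (Filter.eventually_ge_atTop 1)).exists
  obtain ⟨hmε, hm1⟩ := hm
  have hmf1 : (1 : ℝ) ≤ (Nat.factorial m : ℝ) := by
    exact_mod_cast Nat.factorial_pos m
  have hbase0 : (0 : ℝ) ≤ 1 - 1 / (Nat.factorial m : ℝ) := by
    have : 1 / (Nat.factorial m : ℝ) ≤ 1 := by
      rw [div_le_one (by positivity)]
      exact hmf1
    linarith
  have hbase1 : 1 - 1 / (Nat.factorial m : ℝ) < 1 := by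
    have : 0 < 1 / (Nat.factorial m : ℝ) := by positivity
    linarith
  -- choose j0
  have hpow : Filter.Tendsto (fun j : ℕ => (m : ℝ) * (1 - 1 / (Nat.factorial m : ℝ)) ^ j)
      Filter.atTop (nhds 0) := by
    have h := tendsto_pow_atTop_nhds_zero_of_lt_one hbase0 hbase1
    simpa using h.const_mul (m : ℝ)
  obtain ⟨j0, hj0⟩ := (hpow.eventually_lt_const hε3).exists
  -- term 3 eventually small
  have hterm3 : ∀ᶠ n : ℕ in Filter.atTop,
      (n : ℝ) * (1 / (Nat.factorial (n / 4) : ℝ)) < ε / 3 := by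
    have h1n : Filter.Tendsto (fun n : ℕ => (1 : ℝ) / n) Filter.atTop (nhds 0) :=
      tendsto_one_div_atTop_nhds_zero_nat
    filter_upwards [Filter.eventually_ge_atTop 256, h1n.eventually_lt_const hε3]
      with n h256 h1nlt
    have hsq := Stmt15Aux.factorial_quarter_ge_sq h256
    have hnpos : (0 : ℝ) < (n : ℝ) := by
      have : (0 : ℕ) < n := by omega
      exact_mod_cast this
    have hf : ((n : ℝ)) ^ 2 ≤ (Nat.factorial (n / 4) : ℝ) := by exact_mod_cast hsq
    have hfpos : (0 : ℝ) < (Nat.factorial (n / 4) : ℝ) := by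
      exact_mod_cast Nat.factorial_pos _
    have hb : (n : ℝ) * (1 / (Nat.factorial (n / 4) : ℝ)) ≤ 1 / (n : ℝ) := by
      rw [mul_one_div, div_le_div_iff₀ hfpos hnpos, one_mul]
      calc (n : ℝ) * n = (n : ℝ) ^ 2 := by ring
        _ ≤ (Nat.factorial (n / 4) : ℝ) := hf
    linarith
  filter_upwards [Filter.eventually_ge_atTop (2 * m + 4),
    Filter.eventually_ge_atTop (m * (j0 + 2) + 1), hterm3] with n hn1 hn2 hn3
  have hbound := Stmt15Aux.main_bound hm1 hn1
    (Finset.univ.filter fun τ : Perm' n => ¬ PattLE (extPerm τ) (intPerm τ))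
    (fun τ => by simp)
  have hT : j0 ≤ (n - 1) / m - 1 := by
    have hmul : (j0 + 2) * m ≤ n - 1 := by
      calc (j0 + 2) * m = m * (j0 + 2) := by ring
        _ ≤ n - 1 := by omega
    have := (Nat.le_div_iff_mul_le (by omega : 0 < m)).2 hmul
    omega
  have hterm1 : (m : ℝ) * (1 - 1 / (Nat.factorial m : ℝ)) ^ ((n - 1) / m - 1)
      ≤ (m : ℝ) * (1 - 1 / (Nat.factorial m : ℝ)) ^ j0 := by
    apply mul_le_mul_of_nonneg_left _ (by positivity)
    exact pow_le_pow_of_le_one hbase0 (by linarith) hT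
  set val : ℝ := ((Finset.univ.filter fun τ : Perm' n =>
      ¬ PattLE (extPerm τ) (intPerm τ)).card : ℝ) / (Nat.factorial n : ℝ) with hval
  have hnonneg : (0 : ℝ) ≤ val := by
    rw [hval]
    positivity
  rw [Real.norm_of_nonneg hnonneg]
  calc val ≤ (m : ℝ) * (1 - 1 / (Nat.factorial m : ℝ)) ^ ((n - 1) / m - 1)
        + 2 * (1 / 2 : ℝ) ^ m + n * (1 / (Nat.factorial (n / 4) : ℝ)) := hbound
    _ < ε / 3 + ε / 3 + ε / 3 := by
        have := le_trans hterm1 (le_of_lt hj0)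
        apply add_lt_add_of_lt_of_lt (add_lt_add_of_le_of_lt this hmε) hn3
    _ = ε := by ring

end
end
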